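/- arXiv:2512.10851 — 4 statements merged into one kernel-verified Lean document; each statement's English description precedes it below -/
import Mathlib

section
/- Under the additional assumption that λ_i + λ̄_j ≠ 0 for all i, j ∈ {1,…,n}, the matrix P_C := Σ_{i=1}^{n} Σ_{j=1}^{n} { −(λ_i + λ̄_j)^{−1} · x_i x_j^† / (N'(λ_i) · conj(N'(λ_j))) }_H satisfies the algebraic Lyapunov equation A_C P_C + P_C A_C^T = − e_n e_n^T. -/
open Matrix Finset

noncomputable section

/-- `N(s) = s^n + ∑_{k<n} a_k s^k`, the characteristic polynomial as a function. -/
def Npoly (n : ℕ) (a : Fin n → ℝ) : ℂ → ℂ :=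
  fun s => s ^ n + ∑ k : Fin n, (a k : ℂ) * s ^ (k : ℕ)

/-- The companion matrix `A_C` (over `ℂ`, with real entries). -/
def Acomp (n : ℕ) (a : Fin n → ℝ) : Matrix (Fin n) (Fin n) ℂ :=
  Matrix.of fun μ ν =>
    if (μ : ℕ) + 1 = n then -(a ν : ℂ)
    else if (ν : ℕ) = (μ : ℕ) + 1 then 1 else 0

/-- The right eigenvector `x_i`, `(x_i)_μ = λ_i^{μ-1}` (0-based: `λ_i^μ`). -/
def xvec (n : ℕ) (lam : Fin n → ℂ) (i : Fin n) : Fin n → ℂ :=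
  fun μ => lam i ^ (μ : ℕ)

/-- The left eigenvector `y_i`, `(y_i)_μ = -∑_{k=μ}^{n} a_k λ_i^{k-μ}` (1-based indices,
with `a_n = 1`). -/
def yvec (n : ℕ) (a : Fin n → ℝ) (lam : Fin n → ℂ) (i : Fin n) : Fin n → ℂ :=
  fun μ => -(lam i ^ (n - 1 - (μ : ℕ)) +
    ∑ k : Fin n, if (μ : ℕ) < (k : ℕ) then (a k : ℂ) * lam i ^ ((k : ℕ) - (μ : ℕ) - 1) else 0)

/-- The residue matrix `R_i = x_i y_i^T / (-N'(λ_i))`. -/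
def Rres (n : ℕ) (a : Fin n → ℝ) (lam : Fin n → ℂ) (i : Fin n) :
    Matrix (Fin n) (Fin n) ℂ :=
  (-(deriv (Npoly n a) (lam i)))⁻¹ • Matrix.vecMulVec (xvec n lam i) (yvec n a lam i)

/-- `J = diag((-1)^1, …, (-1)^n)`. -/
def Jmat (n : ℕ) : Matrix (Fin n) (Fin n) ℂ :=
  Matrix.diagonal fun μ => (-1 : ℂ) ^ ((μ : ℕ) + 1)

/-- Hermitian part `{M}_H = (M + Mᴴ)/2`. -/
def hermPart {m : Type*} [Fintype m] (M : Matrix m m ℂ) : Matrix m m ℂ :=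
  (2 : ℂ)⁻¹ • (M + Mᴴ)

/-- The last standard basis vector `e_n`. -/
def evec (n : ℕ) : Fin n → ℂ := fun μ => if (μ : ℕ) = n - 1 then 1 else 0

namespace StmtAux

open Polynomial

variable {n : ℕ} {a : Fin n → ℝ} {lam : Fin n → ℂ}

/-- The characteristic polynomial as a `Polynomial`. -/
def pp (n : ℕ) (a : Fin n → ℝ) : ℂ[X] :=
  X ^ n + ∑ k : Fin n, C ((a k : ℂ)) * X ^ (k : ℕ)

lemma eval_pp (x : ℂ) : (pp n a).eval x = Npoly n a x := by
  simp [pp, Npoly, eval_finset_sum]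

lemma deriv_N (x : ℂ) : deriv (Npoly n a) x = ((pp n a).derivative).eval x := by
  have h : Npoly n a = fun y => (pp n a).eval y := by
    funext y; rw [eval_pp]
  rw [h, Polynomial.deriv]

lemma monic_pp : (pp n a).Monic :=
  monic_X_pow_add (degree_sum_fin_lt _)

lemma degree_pp : (pp n a).degree = n := by
  have h := degree_sum_fin_lt (fun k : Fin n => (a k : ℂ))
  rw [pp, degree_add_eq_left_of_degree_lt (by simpa [degree_X_pow] using h), degree_X_pow]

lemma pp_eq_nodal (hn : 0 < n) (hroot : ∀ i, Npoly n a (lam i) = 0)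
    (hdist : Function.Injective lam) :
    pp n a = Lagrange.nodal Finset.univ lam := by
  have hvs : Set.InjOn lam (Finset.univ : Finset (Fin n)) := fun i _ j _ h => hdist h
  have hcard : #(Finset.univ : Finset (Fin n)) = n := by simp
  have hdn : (Lagrange.nodal (Finset.univ : Finset (Fin n)) lam).degree = n := by
    rw [Lagrange.degree_nodal, hcard]
  apply Polynomial.eq_of_degree_sub_lt_of_eval_index_eq _ hvs
  · rw [hcard]
    have := Polynomial.degree_sub_lt (p := pp n a)
      (q := Lagrange.nodal Finset.univ lam) (by rw [degree_pp, hdn])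
      (monic_pp.ne_zero)
      (by rw [(monic_pp (a := a)).leadingCoeff, (Lagrange.nodal_monic).leadingCoeff])
    rwa [degree_pp] at this
  · intro i _
    rw [eval_pp, hroot i, Lagrange.eval_nodal_at_node (Finset.mem_univ i)]

lemma key (hn : 0 < n) (hroot : ∀ i, Npoly n a (lam i) = 0)
    (hdist : Function.Injective lam) (μ : Fin n) :
    ∑ i, (deriv (Npoly n a) (lam i))⁻¹ * lam i ^ (μ : ℕ) =
      if (μ : ℕ) = n - 1 then 1 else 0 := by
  have hvs : Set.InjOn lam (Finset.univ : Finset (Fin n)) := fun i _ j _ h => hdist h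
  have hcard : #(Finset.univ : Finset (Fin n)) = n := by simp
  have hdeg : ((X : ℂ[X]) ^ (μ : ℕ)).degree < #(Finset.univ : Finset (Fin n)) := by
    rw [degree_X_pow, hcard]; exact_mod_cast μ.2
  have hinterp := Lagrange.eq_interpolate hvs hdeg
  have hcoeff := congrArg (fun q : ℂ[X] => q.coeff (n - 1)) hinterp
  simp only [Lagrange.interpolate_apply, Polynomial.finset_sum_coeff, coeff_C_mul,
    eval_pow, eval_X, coeff_X_pow] at hcoeff
  have hb : ∀ i : Fin n, (Lagrange.basis Finset.univ lam i).coeff (n - 1) =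
      Lagrange.nodalWeight Finset.univ lam i := by
    intro i
    rw [Lagrange.basis_eq_prod_sub_inv_mul_nodal_div (Finset.mem_univ i),
      ← Lagrange.nodal_erase_eq_nodal_div (Finset.mem_univ i), coeff_C_mul]
    have hmon : (Lagrange.nodal ((Finset.univ : Finset (Fin n)).erase i) lam).Monic :=
      Lagrange.nodal_monic
    have hnd : (Lagrange.nodal ((Finset.univ : Finset (Fin n)).erase i) lam).natDegree
        = n - 1 := by
      rw [Lagrange.natDegree_nodal, Finset.card_erase_of_mem (Finset.mem_univ i), hcard]
    rw [← hnd, hmon.coeff_natDegree, mul_one]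
  have hw : ∀ i : Fin n, Lagrange.nodalWeight Finset.univ lam i =
      (deriv (Npoly n a) (lam i))⁻¹ := by
    intro i
    rw [Lagrange.nodalWeight_eq_eval_derivative_nodal (Finset.mem_univ i),
      ← pp_eq_nodal hn hroot hdist, ← deriv_N]
  simp only [hb, hw] at hcoeff
  calc ∑ i, (deriv (Npoly n a) (lam i))⁻¹ * lam i ^ (μ : ℕ)
      = ∑ i, lam i ^ (μ : ℕ) * (deriv (Npoly n a) (lam i))⁻¹ :=
        Finset.sum_congr rfl fun i _ => mul_comm _ _
    _ = if n - 1 = (μ : ℕ) then 1 else 0 := hcoeff.symm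
    _ = if (μ : ℕ) = n - 1 then 1 else 0 := by simp [eq_comm]

lemma eig (hroot : ∀ i, Npoly n a (lam i) = 0) (i : Fin n) :
    (Acomp n a) *ᵥ (xvec n lam i) = fun μ => lam i * xvec n lam i μ := by
  funext μ
  simp only [Matrix.mulVec, dotProduct, Acomp, Matrix.of_apply, xvec]
  by_cases hμ : (μ : ℕ) + 1 = n
  · simp only [if_pos hμ]
    have h0 := hroot i
    simp only [Npoly] at h0
    have hμn : lam i ^ n = lam i * lam i ^ (μ : ℕ) := by
      conv_lhs => rw [← hμ]
      rw [pow_succ']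
    calc ∑ k : Fin n, -(a k : ℂ) * lam i ^ (k : ℕ)
        = -∑ k : Fin n, (a k : ℂ) * lam i ^ (k : ℕ) := by
          simp [neg_mul]
      _ = lam i ^ n := by linear_combination -h0
      _ = lam i * lam i ^ (μ : ℕ) := hμn
  · have hlt : (μ : ℕ) + 1 < n := lt_of_le_of_ne μ.2 hμ
    have : ∑ k : Fin n,
        (if (μ : ℕ) + 1 = n then -(a k : ℂ) else if (k : ℕ) = (μ : ℕ) + 1 then 1 else 0)
          * lam i ^ (k : ℕ) = lam i ^ ((μ : ℕ) + 1) := by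
      rw [Finset.sum_eq_single_of_mem (⟨(μ : ℕ) + 1, hlt⟩ : Fin n) (Finset.mem_univ _)]
      · rw [if_neg hμ, if_pos rfl, one_mul]
      · intro k _ hk
        rw [if_neg hμ, if_neg (fun h => hk (Fin.ext h)), zero_mul]
    rw [this, pow_succ']

lemma Acomp_real (μ ν : Fin n) :
    (starRingEnd ℂ) (Acomp n a μ ν) = Acomp n a μ ν := by
  simp only [Acomp, Matrix.of_apply]
  split_ifs <;> simp

lemma eig_star (hroot : ∀ i, Npoly n a (lam i) = 0) (j : Fin n) :
    (Acomp n a) *ᵥ (fun ν => (starRingEnd ℂ) (xvec n lam j ν)) =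
      fun μ => (starRingEnd ℂ) (lam j) * (starRingEnd ℂ) (xvec n lam j μ) := by
  funext μ
  have h := congrFun (eig hroot j) μ
  simp only [Matrix.mulVec, dotProduct] at h ⊢
  calc ∑ k, Acomp n a μ k * (starRingEnd ℂ) (xvec n lam j k)
      = (starRingEnd ℂ) (∑ k, Acomp n a μ k * xvec n lam j k) := by
        rw [map_sum]
        exact Finset.sum_congr rfl fun k _ => by rw [_root_.map_mul, Acomp_real]
    _ = _ := by rw [h, _root_.map_mul]

lemma mul_vmv (A : Matrix (Fin n) (Fin n) ℂ) (x y : Fin n → ℂ) :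
    A * Matrix.vecMulVec x y = Matrix.vecMulVec (A *ᵥ x) y := by
  ext μ ν
  simp only [Matrix.mul_apply, Matrix.vecMulVec_apply, Matrix.mulVec, dotProduct,
    Finset.sum_mul]
  exact Finset.sum_congr rfl fun k _ => by ring

lemma vmv_mul (A : Matrix (Fin n) (Fin n) ℂ) (x y : Fin n → ℂ) :
    Matrix.vecMulVec x y * Aᵀ = Matrix.vecMulVec x (A *ᵥ y) := by
  ext μ ν
  simp only [Matrix.mul_apply, Matrix.vecMulVec_apply, Matrix.mulVec, dotProduct,
    Matrix.transpose_apply, Finset.mul_sum]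
  exact Finset.sum_congr rfl fun k _ => by ring

lemma vmv_smul_left (t : ℂ) (x y : Fin n → ℂ) :
    Matrix.vecMulVec (fun μ => t * x μ) y = t • Matrix.vecMulVec x y := by
  ext μ ν
  simp only [Matrix.vecMulVec_apply, Matrix.smul_apply, smul_eq_mul]
  ring

lemma vmv_smul_right (t : ℂ) (x y : Fin n → ℂ) :
    Matrix.vecMulVec x (fun ν => t * y ν) = t • Matrix.vecMulVec x y := by
  ext μ ν
  simp only [Matrix.vecMulVec_apply, Matrix.smul_apply, smul_eq_mul]
  ring

end StmtAux

/-- If `λ_i + conj λ_j ≠ 0` for all `i, j`, then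
`P_C = ∑ i j { -(λ_i + conj λ_j)⁻¹ x_i x_jᴴ / (N'(λ_i) conj (N'(λ_j))) }_H` satisfies the
algebraic Lyapunov equation `A_C P_C + P_C A_Cᵀ = -e_n e_nᵀ`. -/
theorem stmt1 (n : ℕ) (hn : 0 < n) (a : Fin n → ℝ) (lam : Fin n → ℂ)
    (hroot : ∀ i, Npoly n a (lam i) = 0)
    (hdist : Function.Injective lam)
    (hNp : ∀ i, deriv (Npoly n a) (lam i) ≠ 0)
    (hsum : ∀ i j, lam i + (starRingEnd ℂ) (lam j) ≠ 0)
    (P : Matrix (Fin n) (Fin n) ℂ)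
    (hP : P = ∑ i, ∑ j, hermPart
        ((-(lam i + (starRingEnd ℂ) (lam j))⁻¹ *
            (deriv (Npoly n a) (lam i) * (starRingEnd ℂ) (deriv (Npoly n a) (lam j)))⁻¹) •
          Matrix.vecMulVec (xvec n lam i) (fun μ => (starRingEnd ℂ) (xvec n lam j μ)))) :
    Acomp n a * P + P * (Acomp n a)ᵀ = -Matrix.vecMulVec (evec n) (evec n) := by
  classical
  subst hP
  -- abbreviations (as `∀`-statements, to rewrite under binders)
  have hcc : ∀ i j : Fin n,
      (starRingEnd ℂ) (-(lam i + (starRingEnd ℂ) (lam j))⁻¹ *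
        (deriv (Npoly n a) (lam i) * (starRingEnd ℂ) (deriv (Npoly n a) (lam j)))⁻¹)
      = -(lam j + (starRingEnd ℂ) (lam i))⁻¹ *
        (deriv (Npoly n a) (lam j) * (starRingEnd ℂ) (deriv (Npoly n a) (lam i)))⁻¹ := by
    intro i j
    simp only [_root_.map_mul, map_neg, map_inv₀, map_add, Complex.conj_conj]
    ring
  -- Step 1: expand the Hermitian part
  have h1 : ∀ i j : Fin n, hermPart
      ((-(lam i + (starRingEnd ℂ) (lam j))⁻¹ *
          (deriv (Npoly n a) (lam i) * (starRingEnd ℂ) (deriv (Npoly n a) (lam j)))⁻¹) •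
        Matrix.vecMulVec (xvec n lam i) (fun μ => (starRingEnd ℂ) (xvec n lam j μ)))
      = (2:ℂ)⁻¹ • ((-(lam i + (starRingEnd ℂ) (lam j))⁻¹ *
          (deriv (Npoly n a) (lam i) * (starRingEnd ℂ) (deriv (Npoly n a) (lam j)))⁻¹) •
        Matrix.vecMulVec (xvec n lam i) (fun μ => (starRingEnd ℂ) (xvec n lam j μ)))
      + (2:ℂ)⁻¹ • ((-(lam j + (starRingEnd ℂ) (lam i))⁻¹ *
          (deriv (Npoly n a) (lam j) * (starRingEnd ℂ) (deriv (Npoly n a) (lam i)))⁻¹) •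
        Matrix.vecMulVec (xvec n lam j) (fun μ => (starRingEnd ℂ) (xvec n lam i μ))) := by
    intro i j
    rw [hermPart, smul_add]
    congr 1
    ext μ ν
    simp only [Matrix.conjTranspose_apply, Matrix.smul_apply, Matrix.vecMulVec_apply,
      smul_eq_mul, Complex.star_def, _root_.map_mul, map_neg, map_inv₀, map_add,
      Complex.conj_conj]
    ring
  simp only [h1, Finset.sum_add_distrib]
  rw [show (∑ i : Fin n, ∑ j : Fin n, (2:ℂ)⁻¹ •
      ((-(lam j + (starRingEnd ℂ) (lam i))⁻¹ *
          (deriv (Npoly n a) (lam j) * (starRingEnd ℂ) (deriv (Npoly n a) (lam i)))⁻¹) •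
        Matrix.vecMulVec (xvec n lam j) (fun μ => (starRingEnd ℂ) (xvec n lam i μ))))
      = ∑ i : Fin n, ∑ j : Fin n, (2:ℂ)⁻¹ •
      ((-(lam i + (starRingEnd ℂ) (lam j))⁻¹ *
          (deriv (Npoly n a) (lam i) * (starRingEnd ℂ) (deriv (Npoly n a) (lam j)))⁻¹) •
        Matrix.vecMulVec (xvec n lam i) (fun μ => (starRingEnd ℂ) (xvec n lam j μ)))
    from Finset.sum_comm]
  simp only [← Finset.smul_sum]
  rw [← add_smul, show (2:ℂ)⁻¹ + 2⁻¹ = 1 by norm_num, one_smul]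
  -- Step 2: Lyapunov operator on each elementary term
  have h3 : ∀ i j : Fin n,
      Acomp n a * ((-(lam i + (starRingEnd ℂ) (lam j))⁻¹ *
          (deriv (Npoly n a) (lam i) * (starRingEnd ℂ) (deriv (Npoly n a) (lam j)))⁻¹) •
        Matrix.vecMulVec (xvec n lam i) (fun μ => (starRingEnd ℂ) (xvec n lam j μ)))
      + ((-(lam i + (starRingEnd ℂ) (lam j))⁻¹ *
          (deriv (Npoly n a) (lam i) * (starRingEnd ℂ) (deriv (Npoly n a) (lam j)))⁻¹) •
        Matrix.vecMulVec (xvec n lam i) (fun μ => (starRingEnd ℂ) (xvec n lam j μ)))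
          * (Acomp n a)ᵀ
      = (-(deriv (Npoly n a) (lam i) * (starRingEnd ℂ) (deriv (Npoly n a) (lam j)))⁻¹) •
        Matrix.vecMulVec (xvec n lam i) (fun μ => (starRingEnd ℂ) (xvec n lam j μ)) := by
    intro i j
    rw [Matrix.mul_smul, Matrix.smul_mul, StmtAux.mul_vmv, StmtAux.vmv_mul,
      StmtAux.eig hroot i, StmtAux.eig_star hroot j,
      StmtAux.vmv_smul_left, StmtAux.vmv_smul_right,
      smul_smul, smul_smul, ← add_smul]
    congr 1
    have hkey2 : (lam i + (starRingEnd ℂ) (lam j))⁻¹ * (lam i + (starRingEnd ℂ) (lam j)) = 1 :=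
      inv_mul_cancel₀ (hsum i j)
    linear_combination
      (-(deriv (Npoly n a) (lam i) * (starRingEnd ℂ) (deriv (Npoly n a) (lam j)))⁻¹) * hkey2
  rw [Matrix.mul_sum, Matrix.sum_mul, ← Finset.sum_add_distrib]
  simp only [Matrix.mul_sum, Matrix.sum_mul, ← Finset.sum_add_distrib]
  simp only [h3]
  -- Step 3: evaluate the double sum entrywise
  ext μ ν
  have hterm : ∀ i j : Fin n,
      (-(deriv (Npoly n a) (lam i) * (starRingEnd ℂ) (deriv (Npoly n a) (lam j)))⁻¹)
        * (xvec n lam i μ * (starRingEnd ℂ) (xvec n lam j ν))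
      = -(((deriv (Npoly n a) (lam i))⁻¹ * lam i ^ (μ : ℕ)) *
          (starRingEnd ℂ) ((deriv (Npoly n a) (lam j))⁻¹ * lam j ^ (ν : ℕ))) := by
    intro i j
    simp only [xvec, _root_.map_mul, map_inv₀, map_pow]
    ring
  simp only [Matrix.sum_apply, Matrix.smul_apply, Matrix.vecMulVec_apply, smul_eq_mul,
    Matrix.neg_apply, hterm, Finset.sum_neg_distrib, ← Finset.mul_sum, ← Finset.sum_mul]
  rw [← map_sum, StmtAux.key hn hroot hdist μ, StmtAux.key hn hroot hdist ν]
  simp only [evec, apply_ite (starRingEnd ℂ), RingHom.map_one, map_zero]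

end
end

section
/- Under the additional assumption that λ_i + λ̄_j ≠ 0 for all i, j ∈ {1,…,n}, the matrix-valued function P_C(t) := Σ_{i=1}^{n} Σ_{j=1}^{n} { ((e^{(λ_i+λ̄_j)t} − 1)/(λ_i + λ̄_j)) · x_i x_j^† / (N'(λ_i) · conj(N'(λ_j))) }_H satisfies P_C(0) = 0 and, for every t ∈ ℝ, P_C is differentiable at t with derivative P_C'(t) = A_C P_C(t) + P_C(t) A_C^T + e_n e_n^T (i.e., P_C solves the differential Lyapunov equation −dP/dt + A_C P + P A_C^T = −e_n e_n^T with zero initial condition). -/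
open Matrix Finset

noncomputable section

attribute [local instance] Matrix.normedAddCommGroup Matrix.normedSpace

/-! ### Auxiliary polynomial lemmas -/

open Polynomial in
lemma npoly_eq_eval (n : ℕ) (a : Fin n → ℝ) (s : ℂ) :
    Npoly n a s = (X ^ n + ∑ k : Fin n, C ((a k : ℂ)) * X ^ (k : ℕ)).eval s := by
  simp [Npoly, eval_finset_sum]

open Polynomial in
lemma ppoly_eq_prod (n : ℕ) (hn : 0 < n) (a : Fin n → ℝ) (lam : Fin n → ℂ)
    (hroot : ∀ i, Npoly n a (lam i) = 0) (hdist : Function.Injective lam) :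
    (X ^ n + ∑ k : Fin n, C ((a k : ℂ)) * X ^ (k : ℕ)) = ∏ i : Fin n, (X - C (lam i)) := by
  have hmon : (∏ i : Fin n, (X - C (lam i))).Monic :=
    monic_prod_of_monic _ _ fun i _ => monic_X_sub_C _
  have hdeg : (∏ i : Fin n, (X - C (lam i))).natDegree = n := by
    rw [natDegree_prod_of_monic _ _ fun i _ => monic_X_sub_C _]
    simp
  have key : (X ^ n + ∑ k : Fin n, C ((a k : ℂ)) * X ^ (k : ℕ))
      - ∏ i : Fin n, (X - C (lam i)) = 0 := by
    set q := (X ^ n + ∑ k : Fin n, C ((a k : ℂ)) * X ^ (k : ℕ))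
      - ∏ i : Fin n, (X - C (lam i)) with hq
    have hcoeff : ∀ m : ℕ, n ≤ m → q.coeff m = 0 := by
      intro m hm
      have h1 : (∑ k : Fin n, C ((a k : ℂ)) * X ^ (k : ℕ)).coeff m = 0 := by
        rw [finset_sum_coeff]
        refine Finset.sum_eq_zero fun k _ => ?_
        rw [coeff_C_mul, coeff_X_pow, if_neg (by omega : m ≠ (k : ℕ)), mul_zero]
      have h2 : (∏ i : Fin n, (X - C (lam i))).coeff m = if n = m then 1 else 0 := by
        rcases eq_or_lt_of_le hm with h | h
        · have := hmon.coeff_natDegree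
          rw [hdeg] at this
          rw [if_pos h, ← h, this]
        · rw [if_neg h.ne, coeff_eq_zero_of_natDegree_lt]
          omega
      rw [hq, coeff_sub, coeff_add, coeff_X_pow, h1, h2]
      by_cases h : m = n
      · simp [h]
      · rw [if_neg (by omega), if_neg (by omega)]
        ring
    by_cases hq0 : q = 0
    · exact hq0
    · refine eq_zero_of_natDegree_lt_card_of_eval_eq_zero q hdist (fun i => ?_) ?_
      · rw [hq, eval_sub, ← npoly_eq_eval, hroot i, eval_prod]
        rw [Finset.prod_eq_zero (Finset.mem_univ i) (by simp)]
        simp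
      · rw [Fintype.card_fin]
        have := (degree_lt_iff_coeff_zero q n).2
          (by intro m hm; exact hcoeff m (by exact_mod_cast hm))
        exact natDegree_lt_iff_degree_lt hq0 |>.2 (by exact_mod_cast this)
  exact sub_eq_zero.mp key

open Polynomial in
lemma deriv_npoly (n : ℕ) (hn : 0 < n) (a : Fin n → ℝ) (lam : Fin n → ℂ)
    (hroot : ∀ i, Npoly n a (lam i) = 0) (hdist : Function.Injective lam) (i : Fin n) :
    deriv (Npoly n a) (lam i) = ∏ j ∈ Finset.univ.erase i, (lam i - lam j) := by
  have h1 : Npoly n a = fun s => (∏ i : Fin n, (X - C (lam i))).eval s := by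
    funext s; rw [npoly_eq_eval, ppoly_eq_prod n hn a lam hroot hdist]
  rw [h1, Polynomial.deriv]
  have hS : (∏ j : Fin n, (X - C (lam j)))
      = (Multiset.map (fun z => X - C z) (Multiset.map lam Finset.univ.val)).prod := by
    rw [Multiset.map_map]; rfl
  rw [hS, eval_multiset_prod_X_sub_C_derivative
    (by simp only [Multiset.mem_map]; exact ⟨i, by simp, rfl⟩)]
  rw [← Multiset.map_erase lam hdist i Finset.univ.val, Multiset.map_map,
    ← Finset.erase_val]
  rfl

open Polynomial in
lemma interp (n : ℕ) (hn : 0 < n) (lam : Fin n → ℂ) (hdist : Function.Injective lam)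
    (μ : ℕ) (hμ : μ < n) :
    ∑ i, (lam i) ^ μ * (∏ j ∈ Finset.univ.erase i, (lam i - lam j))⁻¹
      = if μ = n - 1 then 1 else 0 := by
  set D : Fin n → ℂ := fun i => ∏ j ∈ Finset.univ.erase i, (lam i - lam j) with hD
  have hDne : ∀ i, D i ≠ 0 := by
    intro i
    refine Finset.prod_ne_zero_iff.2 fun j hj => sub_ne_zero.2 fun h => ?_
    exact (Finset.mem_erase.1 hj).1 (hdist h.symm)
  set h : ℂ[X] := ∑ i : Fin n, C ((lam i) ^ μ * (D i)⁻¹)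
    * ∏ j ∈ Finset.univ.erase i, (X - C (lam j)) with hh
  have hmon : ∀ i : Fin n, (∏ j ∈ Finset.univ.erase i, (X - C (lam j))).Monic :=
    fun i => monic_prod_of_monic _ _ fun j _ => monic_X_sub_C _
  have hdegp : ∀ i : Fin n, (∏ j ∈ Finset.univ.erase i, (X - C (lam j))).natDegree = n - 1 := by
    intro i
    rw [natDegree_prod_of_monic _ _ fun j _ => monic_X_sub_C _]
    simp [Finset.card_erase_of_mem]
  have key : h = X ^ μ := by
    have hz : h - X ^ μ = 0 := by
      by_cases hq0 : h - X ^ μ = 0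
      · exact hq0
      refine eq_zero_of_natDegree_lt_card_of_eval_eq_zero _ hdist (fun k => ?_) ?_
      · rw [eval_sub, eval_pow, eval_X, hh, eval_finset_sum]
        rw [Finset.sum_eq_single k]
        · rw [eval_mul, eval_C, eval_prod]
          simp only [eval_sub, eval_X, eval_C]
          rw [mul_assoc, inv_mul_cancel₀ (hDne k), mul_one, sub_self]
        · intro i _ hik
          rw [eval_mul, eval_prod]
          rw [Finset.prod_eq_zero (Finset.mem_erase.2 ⟨fun he => hik he.symm, Finset.mem_univ k⟩)
            (by simp), mul_zero]
        · intro hk; exact absurd (Finset.mem_univ k) hk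
      · rw [Fintype.card_fin]
        have hcoeff : ∀ m : ℕ, n ≤ m → (h - X ^ μ).coeff m = 0 := by
          intro m hm
          rw [coeff_sub, coeff_X_pow, if_neg (by omega), hh, finset_sum_coeff]
          rw [Finset.sum_eq_zero, sub_zero]
          intro i _
          rw [coeff_C_mul, coeff_eq_zero_of_natDegree_lt (by rw [hdegp i]; omega), mul_zero]
        have := (degree_lt_iff_coeff_zero _ n).2
          (by intro m hm; exact hcoeff m (by exact_mod_cast hm))
        exact natDegree_lt_iff_degree_lt hq0 |>.2 (by exact_mod_cast this)
    exact sub_eq_zero.mp hz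
  have hcoe : h.coeff (n - 1) = ∑ i, (lam i) ^ μ * (D i)⁻¹ := by
    rw [hh, finset_sum_coeff]
    refine Finset.sum_congr rfl fun i _ => ?_
    rw [coeff_C_mul]
    have := (hmon i).coeff_natDegree
    rw [hdegp i] at this
    rw [this, mul_one]
  rw [← hcoe, key, coeff_X_pow]
  by_cases hc : μ = n - 1 <;> simp [hc, eq_comm]

/-! ### Matrix helper lemmas -/

lemma mul_vecMulVec {n : ℕ} (A : Matrix (Fin n) (Fin n) ℂ) (x y : Fin n → ℂ) :
    A * Matrix.vecMulVec x y = Matrix.vecMulVec (A *ᵥ x) y := by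
  ext μ ν
  simp [Matrix.mul_apply, Matrix.vecMulVec_apply, Matrix.mulVec, dotProduct,
    Finset.sum_mul, mul_assoc]

lemma vecMulVec_mulA {n : ℕ} (A : Matrix (Fin n) (Fin n) ℂ) (x y : Fin n → ℂ) :
    Matrix.vecMulVec x y * A = Matrix.vecMulVec x (y ᵥ* A) := by
  ext μ ν
  simp [Matrix.mul_apply, Matrix.vecMulVec_apply, Matrix.vecMul, dotProduct,
    Finset.mul_sum, mul_assoc]

lemma smul_vecMulVec_left {n : ℕ} (c : ℂ) (x y : Fin n → ℂ) :
    Matrix.vecMulVec (c • x) y = c • Matrix.vecMulVec x y := by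
  ext μ ν
  simp [Matrix.vecMulVec_apply, mul_assoc]

lemma smul_vecMulVec_right {n : ℕ} (c : ℂ) (x y : Fin n → ℂ) :
    Matrix.vecMulVec x (c • y) = c • Matrix.vecMulVec x y := by
  ext μ ν
  simp [Matrix.vecMulVec_apply, mul_left_comm]

/-- Eigenvector property of the companion matrix. -/
lemma eigen (n : ℕ) (a : Fin n → ℝ) (lam : Fin n → ℂ)
    (hroot : ∀ i, Npoly n a (lam i) = 0) (i : Fin n) :
    Acomp n a *ᵥ xvec n lam i = lam i • xvec n lam i := by
  funext μ
  simp only [Matrix.mulVec, dotProduct, Acomp, xvec, Matrix.of_apply, Pi.smul_apply,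
    smul_eq_mul]
  by_cases h : (μ : ℕ) + 1 = n
  · simp only [if_pos h]
    have h0 := hroot i
    simp only [Npoly] at h0
    have h2 : lam i * lam i ^ (μ : ℕ) = lam i ^ n :=
      (pow_succ' (lam i) (μ : ℕ)).symm.trans (by rw [h])
    rw [h2]
    have h3 : ∑ ν : Fin n, -(a ν : ℂ) * lam i ^ (ν : ℕ)
        = -(∑ ν : Fin n, (a ν : ℂ) * lam i ^ (ν : ℕ)) := by
      rw [← Finset.sum_neg_distrib]
      exact Finset.sum_congr rfl fun ν _ => by ring
    rw [h3]
    linear_combination -h0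
  · simp only [if_neg h]
    have hlt : (μ : ℕ) + 1 < n := lt_of_le_of_ne μ.isLt h
    rw [Finset.sum_eq_single (⟨(μ : ℕ) + 1, hlt⟩ : Fin n)]
    · rw [if_pos rfl, one_mul, pow_succ, mul_comm]
    · intro ν _ hν
      rw [if_neg (fun hc => hν (Fin.ext hc)), zero_mul]
    · intro hk; exact absurd (Finset.mem_univ _) hk

/-! ### The scalar coefficient functions and rank-one matrices -/

def cfun (n : ℕ) (a : Fin n → ℝ) (lam : Fin n → ℂ) (i j : Fin n) (t : ℝ) : ℂ :=
  (Complex.exp ((lam i + (starRingEnd ℂ) (lam j)) * (t : ℂ)) - 1) /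
    (lam i + (starRingEnd ℂ) (lam j)) /
    (deriv (Npoly n a) (lam i) * (starRingEnd ℂ) (deriv (Npoly n a) (lam j)))

def Mmat (n : ℕ) (lam : Fin n → ℂ) (i j : Fin n) : Matrix (Fin n) (Fin n) ℂ :=
  Matrix.vecMulVec (xvec n lam i) (fun μ => (starRingEnd ℂ) (xvec n lam j μ))

lemma Mmat_conjT (n : ℕ) (lam : Fin n → ℂ) (i j : Fin n) :
    (Mmat n lam i j)ᴴ = Mmat n lam j i := by
  ext μ ν
  simp [Mmat, Matrix.conjTranspose_apply, Matrix.vecMulVec_apply, mul_comm]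

lemma conj_cfun (n : ℕ) (a : Fin n → ℝ) (lam : Fin n → ℂ) (i j : Fin n) (t : ℝ) :
    (starRingEnd ℂ) (cfun n a lam i j t) = cfun n a lam j i t := by
  unfold cfun
  simp only [map_div₀, map_sub, _root_.map_mul, _root_.map_one, map_add, Complex.conj_conj,
    Complex.conj_ofReal, ← Complex.exp_conj]
  rw [add_comm ((starRingEnd ℂ) (lam i)) (lam j),
    mul_comm ((starRingEnd ℂ) (deriv (Npoly n a) (lam i))) (deriv (Npoly n a) (lam j))]

lemma cfun_zero (n : ℕ) (a : Fin n → ℝ) (lam : Fin n → ℂ) (i j : Fin n) :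
    cfun n a lam i j 0 = 0 := by
  unfold cfun
  simp

lemma cfun_hasDerivAt (n : ℕ) (a : Fin n → ℝ) (lam : Fin n → ℂ) (i j : Fin n)
    (hw : lam i + (starRingEnd ℂ) (lam j) ≠ 0) (t : ℝ) :
    HasDerivAt (cfun n a lam i j)
      (Complex.exp ((lam i + (starRingEnd ℂ) (lam j)) * (t : ℂ)) /
        (deriv (Npoly n a) (lam i) * (starRingEnd ℂ) (deriv (Npoly n a) (lam j)))) t := by
  set w := lam i + (starRingEnd ℂ) (lam j) with hwdef
  set d := deriv (Npoly n a) (lam i) * (starRingEnd ℂ) (deriv (Npoly n a) (lam j)) with hd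
  have h1 : HasDerivAt (fun z : ℂ => (Complex.exp (w * z) - 1) / w / d)
      (Complex.exp (w * (t : ℂ)) * (w * 1) / w / d) (t : ℂ) :=
    ((((hasDerivAt_id (t : ℂ)).const_mul w).cexp).sub_const 1).div_const w |>.div_const d
  have h2 := h1.comp_ofReal
  have h3 : Complex.exp (w * (t : ℂ)) * (w * 1) / w / d
      = Complex.exp (w * (t : ℂ)) / d := by
    rw [mul_one, mul_div_assoc, div_self hw, mul_one]
  rw [h3] at h2
  exact h2

lemma cfun_split (n : ℕ) (a : Fin n → ℝ) (lam : Fin n → ℂ) (i j : Fin n)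
    (hw : lam i + (starRingEnd ℂ) (lam j) ≠ 0)
    (hd : deriv (Npoly n a) (lam i) * (starRingEnd ℂ) (deriv (Npoly n a) (lam j)) ≠ 0)
    (t : ℝ) :
    Complex.exp ((lam i + (starRingEnd ℂ) (lam j)) * (t : ℂ)) /
      (deriv (Npoly n a) (lam i) * (starRingEnd ℂ) (deriv (Npoly n a) (lam j)))
    = (lam i + (starRingEnd ℂ) (lam j)) * cfun n a lam i j t
      + (deriv (Npoly n a) (lam i) * (starRingEnd ℂ) (deriv (Npoly n a) (lam j)))⁻¹ := by
  unfold cfun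
  field_simp
  ring

lemma evec_key (n : ℕ) (hn : 0 < n) (a : Fin n → ℝ) (lam : Fin n → ℂ)
    (hroot : ∀ i, Npoly n a (lam i) = 0) (hdist : Function.Injective lam) (μ : Fin n) :
    ∑ i, (deriv (Npoly n a) (lam i))⁻¹ * lam i ^ (μ : ℕ) = evec n μ := by
  have h1 : ∀ i : Fin n, (deriv (Npoly n a) (lam i))⁻¹ * lam i ^ (μ : ℕ)
      = lam i ^ (μ : ℕ) * (∏ j ∈ Finset.univ.erase i, (lam i - lam j))⁻¹ := by
    intro i; rw [deriv_npoly n hn a lam hroot hdist i, mul_comm]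
  simp only [h1]
  rw [interp n hn lam hdist (μ : ℕ) μ.isLt]
  rfl

/-- The pairwise spectral decomposition
`P_C(t) = ∑ i j { ((e^{(λ_i+conj λ_j)t} - 1)/(λ_i + conj λ_j)) x_i x_jᴴ /
(N'(λ_i) conj (N'(λ_j))) }_H` solves the differential Lyapunov equation with zero initial
condition. -/
theorem stmt4 (n : ℕ) (hn : 0 < n) (a : Fin n → ℝ) (lam : Fin n → ℂ)
    (hroot : ∀ i, Npoly n a (lam i) = 0)
    (hdist : Function.Injective lam)
    (hNp : ∀ i, deriv (Npoly n a) (lam i) ≠ 0)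
    (hsum : ∀ i j, lam i + (starRingEnd ℂ) (lam j) ≠ 0)
    (P : ℝ → Matrix (Fin n) (Fin n) ℂ)
    (hP : P = fun t : ℝ => ∑ i, ∑ j, hermPart
        (((Complex.exp ((lam i + (starRingEnd ℂ) (lam j)) * (t : ℂ)) - 1) /
            (lam i + (starRingEnd ℂ) (lam j)) /
            (deriv (Npoly n a) (lam i) * (starRingEnd ℂ) (deriv (Npoly n a) (lam j)))) •
          Matrix.vecMulVec (xvec n lam i) (fun μ => (starRingEnd ℂ) (xvec n lam j μ)))) :
    P 0 = 0 ∧ ∀ t : ℝ,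
      HasDerivAt P
        (Acomp n a * P t + P t * (Acomp n a)ᵀ + Matrix.vecMulVec (evec n) (evec n)) t := by
  have hP' : P = fun t : ℝ => ∑ i, ∑ j,
      hermPart (cfun n a lam i j t • Mmat n lam i j) := hP
  clear hP
  have hdne : ∀ i j : Fin n,
      deriv (Npoly n a) (lam i) * (starRingEnd ℂ) (deriv (Npoly n a) (lam j)) ≠ 0 := by
    intro i j
    exact mul_ne_zero (hNp i) (by simpa using hNp j)
  -- P equals the plain double sum S
  have hPS : P = fun t : ℝ => ∑ i, ∑ j, cfun n a lam i j t • Mmat n lam i j := by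
    rw [hP']
    funext t
    have h1 : ∀ i j : Fin n, hermPart (cfun n a lam i j t • Mmat n lam i j)
        = (2 : ℂ)⁻¹ • (cfun n a lam i j t • Mmat n lam i j)
          + (2 : ℂ)⁻¹ • (cfun n a lam j i t • Mmat n lam j i) := by
      intro i j
      rw [hermPart, smul_add]
      congr 2
      rw [Matrix.conjTranspose_smul, Mmat_conjT]
      congr 1
      exact conj_cfun n a lam i j t
    simp only [h1, Finset.sum_add_distrib]
    have h2 : ∑ i : Fin n, ∑ j : Fin n, (2 : ℂ)⁻¹ • (cfun n a lam j i t • Mmat n lam j i)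
        = ∑ i : Fin n, ∑ j : Fin n, (2 : ℂ)⁻¹ • (cfun n a lam i j t • Mmat n lam i j) :=
      Finset.sum_comm
    rw [h2, ← two_smul ℂ, Finset.smul_sum]
    refine Finset.sum_congr rfl fun i _ => ?_
    rw [Finset.smul_sum]
    refine Finset.sum_congr rfl fun j _ => ?_
    rw [smul_smul]
    norm_num
  constructor
  · rw [hPS]
    simp [cfun_zero]
  · intro t
    have hAM : ∀ i j : Fin n, Acomp n a * Mmat n lam i j = lam i • Mmat n lam i j := by
      intro i j
      rw [Mmat, mul_vecMulVec, eigen n a lam hroot i, smul_vecMulVec_left]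
    have hMA : ∀ i j : Fin n, Mmat n lam i j * (Acomp n a)ᵀ
        = (starRingEnd ℂ) (lam j) • Mmat n lam i j := by
      intro i j
      rw [Mmat, vecMulVec_mulA, Matrix.vecMul_transpose]
      have hst : Acomp n a *ᵥ (fun μ => (starRingEnd ℂ) (xvec n lam j μ))
          = fun μ => (starRingEnd ℂ) ((Acomp n a *ᵥ xvec n lam j) μ) := by
        funext μ
        simp only [Matrix.mulVec, dotProduct, map_sum]
        refine Finset.sum_congr rfl fun k _ => ?_
        rw [_root_.map_mul]
        congr 1
        simp only [Acomp, Matrix.of_apply, apply_ite (starRingEnd ℂ), map_neg,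
          Complex.conj_ofReal, _root_.map_one, map_zero]
      rw [hst, eigen n a lam hroot j]
      have h5 : (fun μ => (starRingEnd ℂ) ((lam j • xvec n lam j) μ))
          = (starRingEnd ℂ) (lam j) • fun μ => (starRingEnd ℂ) (xvec n lam j μ) := by
        funext μ; simp
      rw [h5, smul_vecMulVec_right]
    have hE : (∑ i : Fin n, ∑ j : Fin n,
        ((deriv (Npoly n a) (lam i) * (starRingEnd ℂ) (deriv (Npoly n a) (lam j)))⁻¹) •
          Mmat n lam i j)
        = Matrix.vecMulVec (evec n) (evec n) := by
      ext μ ν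
      simp only [Matrix.sum_apply, Matrix.smul_apply, Mmat, Matrix.vecMulVec_apply,
        smul_eq_mul, xvec]
      have hterm : ∀ i j : Fin n,
          (deriv (Npoly n a) (lam i) * (starRingEnd ℂ) (deriv (Npoly n a) (lam j)))⁻¹ *
            (lam i ^ (μ : ℕ) * (starRingEnd ℂ) (lam j ^ (ν : ℕ)))
          = ((deriv (Npoly n a) (lam i))⁻¹ * lam i ^ (μ : ℕ)) *
            (((starRingEnd ℂ) (deriv (Npoly n a) (lam j)))⁻¹ *
              (starRingEnd ℂ) (lam j ^ (ν : ℕ))) := by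
        intro i j; rw [mul_inv]; ring
      simp only [hterm]
      rw [← Finset.sum_mul_sum]
      have hconj : ∑ j : Fin n, ((starRingEnd ℂ) (deriv (Npoly n a) (lam j)))⁻¹ *
          (starRingEnd ℂ) (lam j ^ (ν : ℕ))
          = (starRingEnd ℂ) (∑ j : Fin n, (deriv (Npoly n a) (lam j))⁻¹ * lam j ^ (ν : ℕ)) := by
        rw [map_sum]
        exact Finset.sum_congr rfl fun j _ => by rw [_root_.map_mul, map_inv₀]
      rw [hconj, evec_key n hn a lam hroot hdist μ, evec_key n hn a lam hroot hdist ν]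
      congr 1
      simp [evec, apply_ite (starRingEnd ℂ)]
    have hsplit : ∀ i j : Fin n,
        (Complex.exp ((lam i + (starRingEnd ℂ) (lam j)) * (t : ℂ)) /
          (deriv (Npoly n a) (lam i) * (starRingEnd ℂ) (deriv (Npoly n a) (lam j)))) •
            Mmat n lam i j
        = cfun n a lam i j t • (Acomp n a * Mmat n lam i j)
          + cfun n a lam i j t • (Mmat n lam i j * (Acomp n a)ᵀ)
          + ((deriv (Npoly n a) (lam i) * (starRingEnd ℂ) (deriv (Npoly n a) (lam j)))⁻¹) •
              Mmat n lam i j := by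
      intro i j
      rw [hAM, hMA, smul_smul, smul_smul, cfun_split n a lam i j (hsum i j) (hdne i j) t]
      rw [show (lam i + (starRingEnd ℂ) (lam j)) * cfun n a lam i j t
            + (deriv (Npoly n a) (lam i) * (starRingEnd ℂ) (deriv (Npoly n a) (lam j)))⁻¹
          = cfun n a lam i j t * lam i + cfun n a lam i j t * (starRingEnd ℂ) (lam j)
            + (deriv (Npoly n a) (lam i) * (starRingEnd ℂ) (deriv (Npoly n a) (lam j)))⁻¹
          from by ring]
      rw [add_smul, add_smul]
    have hder : HasDerivAt
        (fun s : ℝ => ∑ i : Fin n, ∑ j : Fin n, cfun n a lam i j s • Mmat n lam i j)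
        (∑ i : Fin n, ∑ j : Fin n,
          (Complex.exp ((lam i + (starRingEnd ℂ) (lam j)) * (t : ℂ)) /
            (deriv (Npoly n a) (lam i) * (starRingEnd ℂ) (deriv (Npoly n a) (lam j)))) •
              Mmat n lam i j) t := by
      refine HasDerivAt.fun_sum fun i _ => ?_
      refine HasDerivAt.fun_sum fun j _ => ?_
      exact (cfun_hasDerivAt n a lam i j (hsum i j) t).smul_const _
    rw [hPS]
    beta_reduce
    have heq : Acomp n a * (∑ i : Fin n, ∑ j : Fin n, cfun n a lam i j t • Mmat n lam i j)
        + (∑ i : Fin n, ∑ j : Fin n, cfun n a lam i j t • Mmat n lam i j) * (Acomp n a)ᵀ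
        + Matrix.vecMulVec (evec n) (evec n)
        = ∑ i : Fin n, ∑ j : Fin n,
          (Complex.exp ((lam i + (starRingEnd ℂ) (lam j)) * (t : ℂ)) /
            (deriv (Npoly n a) (lam i) * (starRingEnd ℂ) (deriv (Npoly n a) (lam j)))) •
              Mmat n lam i j := by
      simp only [hsplit, Finset.sum_add_distrib]
      rw [hE]
      simp only [Matrix.mul_sum, Matrix.sum_mul, Matrix.mul_smul, Matrix.smul_mul]
    rw [heq]
    exact hder


end
end

section
/- Under the additional assumption that λ_i + λ_j ≠ 0 for all i, j ∈ {1,…,n}, define P^− := Σ_{j=1}^{n} P̂_j^{−C}, the symmetrized components P̃_i^{−C} := { P̂_i^{−C} }_H, and for x_0 ∈ ℝ^n set x_{i0} := R_i x_0. Then the minimum control energy x_0^T P^− x_0 admits the spectral decomposition x_0^T P^− x_0 = Σ_{i=1}^{n} x_0^T P̃_i^{−C} x_0, and each component satisfies x_0^T P̃_i^{−C} x_0 = ½ ( x_{i0}^† P^− x_0 + x_0^† P^− x_{i0} ). -/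
open Matrix Finset

noncomputable section

namespace Aux

def g (n : ℕ) (a : Fin n → ℝ) (lam : Fin n → ℂ) (i : Fin n) (s : ℂ) : ℂ :=
  ∑ μ : Fin n, yvec n a lam i μ * s ^ (μ : ℕ)

lemma sum_range_ite (N k : ℕ) (hk : k ≤ N) (F : ℕ → ℂ) :
    ∑ m ∈ Finset.range N, (if m < k then F m else 0) = ∑ m ∈ Finset.range k, F m := by
  rw [← Finset.sum_filter]
  congr 1
  ext m
  simp only [Finset.mem_filter, Finset.mem_range]
  omega

lemma g_eq (n : ℕ) (a : Fin n → ℝ) (lam : Fin n → ℂ) (i : Fin n) (s : ℂ) :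
    g n a lam i s = -((∑ μ ∈ Finset.range n, s ^ μ * lam i ^ (n - 1 - μ)) +
      ∑ k : Fin n, (a k : ℂ) * ∑ μ ∈ Finset.range (k : ℕ), s ^ μ * lam i ^ ((k : ℕ) - 1 - μ)) := by
  unfold g yvec
  simp only [neg_add, add_mul, neg_mul, ite_mul, zero_mul, Finset.sum_mul,
    Finset.sum_add_distrib, Finset.sum_neg_distrib]
  congr 1
  · rw [Fin.sum_univ_eq_sum_range (fun m => lam i ^ (n - 1 - m) * s ^ m) n]
    congr 1
    exact Finset.sum_congr rfl fun μ _ => by ring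
  · congr 1
    rw [Finset.sum_comm]
    refine Finset.sum_congr rfl fun k _ => ?_
    rw [Fin.sum_univ_eq_sum_range
      (fun m => if m < (k : ℕ) then (a k : ℂ) * lam i ^ ((k : ℕ) - m - 1) * s ^ m else 0) n,
      sum_range_ite n k k.2.le, Finset.mul_sum]
    refine Finset.sum_congr rfl fun m hm => ?_
    rw [Nat.sub_right_comm]
    ring

lemma gen_id (n : ℕ) (a : Fin n → ℝ) (lam : Fin n → ℂ) (i : Fin n) (s : ℂ) :
    g n a lam i s * (s - lam i) = -(Npoly n a s - Npoly n a (lam i)) := by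
  rw [g_eq, neg_mul, add_mul, geom_sum₂_mul, Finset.sum_mul]
  have h : ∀ k : Fin n, ((a k : ℂ) * ∑ μ ∈ Finset.range (k : ℕ),
      s ^ μ * lam i ^ ((k : ℕ) - 1 - μ)) * (s - lam i)
      = (a k : ℂ) * (s ^ (k : ℕ) - lam i ^ (k : ℕ)) := by
    intro k
    rw [mul_assoc, geom_sum₂_mul]
  rw [Finset.sum_congr rfl (fun k _ => h k)]
  simp only [Npoly]
  simp only [mul_sub]
  rw [Finset.sum_sub_distrib]
  ring


def Npoly' (n : ℕ) (a : Fin n → ℝ) : ℂ → ℂ :=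
  fun s => n * s ^ (n - 1) + ∑ k : Fin n, (a k : ℂ) * ((k : ℕ) * s ^ ((k : ℕ) - 1))

lemma hasDerivAt_Npoly (n : ℕ) (a : Fin n → ℝ) (s : ℂ) :
    HasDerivAt (Npoly n a) (Npoly' n a s) s := by
  have h1 : HasDerivAt (fun x : ℂ => x ^ n) ((n : ℂ) * s ^ (n - 1)) s := hasDerivAt_pow n s
  have h2 : ∀ k : Fin n, HasDerivAt (fun x : ℂ => (a k : ℂ) * x ^ (k : ℕ))
      ((a k : ℂ) * ((k : ℕ) * s ^ ((k : ℕ) - 1))) s :=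
    fun k => (hasDerivAt_pow _ s).const_mul _
  exact h1.add (HasDerivAt.fun_sum fun k _ => h2 k)

lemma deriv_Npoly (n : ℕ) (a : Fin n → ℝ) (s : ℂ) :
    deriv (Npoly n a) s = Npoly' n a s := (hasDerivAt_Npoly n a s).deriv

lemma hasDerivAt_g (n : ℕ) (a : Fin n → ℝ) (lam : Fin n → ℂ) (i : Fin n) (s : ℂ) :
    HasDerivAt (g n a lam i)
      (∑ μ : Fin n, yvec n a lam i μ * ((μ : ℕ) * s ^ ((μ : ℕ) - 1))) s :=
  HasDerivAt.fun_sum fun μ _ => (hasDerivAt_pow _ s).const_mul _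

lemma g_self (n : ℕ) (a : Fin n → ℝ) (lam : Fin n → ℂ) (i : Fin n) :
    g n a lam i (lam i) = -(deriv (Npoly n a) (lam i)) := by
  set t := lam i
  have hL : HasDerivAt (fun s => g n a lam i s * (s - t))
      ((∑ μ : Fin n, yvec n a lam i μ * ((μ : ℕ) * t ^ ((μ : ℕ) - 1))) * (t - t)
        + g n a lam i t * 1) t :=
    (hasDerivAt_g n a lam i t).mul ((hasDerivAt_id t).sub_const t)
  have hR : HasDerivAt (fun s => -(Npoly n a s - Npoly n a t))
      (-(Npoly' n a t)) t := by
    simpa using ((hasDerivAt_Npoly n a t).sub_const (Npoly n a t)).fun_neg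
  have hfun : (fun s => g n a lam i s * (s - t)) = fun s => -(Npoly n a s - Npoly n a t) :=
    funext fun s => gen_id n a lam i s
  rw [hfun] at hL
  have := hL.unique hR
  rw [deriv_Npoly]
  simpa using this

lemma g_root (n : ℕ) (a : Fin n → ℝ) (lam : Fin n → ℂ)
    (hroot : ∀ i, Npoly n a (lam i) = 0) (hdist : Function.Injective lam)
    {i k : Fin n} (hik : i ≠ k) : g n a lam i (lam k) = 0 := by
  have h := gen_id n a lam i (lam k)
  rw [hroot, hroot] at h
  have hne : lam k - lam i ≠ 0 := sub_ne_zero.mpr fun e => hik (hdist e).symm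
  rw [sub_self, neg_zero] at h
  rcases mul_eq_zero.mp h with h' | h'
  · exact h'
  · exact absurd h' hne

lemma g_neg (n : ℕ) (a : Fin n → ℝ) (lam : Fin n → ℂ)
    (hroot : ∀ i, Npoly n a (lam i) = 0) (hsum : ∀ i j, lam i + lam j ≠ 0)
    (i k : Fin n) : g n a lam i (-(lam k)) = Npoly n a (-(lam k)) / (lam k + lam i) := by
  have h := gen_id n a lam i (-(lam k))
  rw [hroot] at h
  have hne : lam k + lam i ≠ 0 := hsum k i
  field_simp
  linear_combination (-1 : ℂ) * h


def Xm (n : ℕ) (lam : Fin n → ℂ) : Matrix (Fin n) (Fin n) ℂ :=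
  Matrix.of fun μ j => lam j ^ (μ : ℕ)

def Ym (n : ℕ) (a : Fin n → ℝ) (lam : Fin n → ℂ) : Matrix (Fin n) (Fin n) ℂ :=
  Matrix.of fun j ν => (-(deriv (Npoly n a) (lam j)))⁻¹ * yvec n a lam j ν

lemma Ym_row_dot (n : ℕ) (a : Fin n → ℝ) (lam : Fin n → ℂ) (j : Fin n) (z : ℂ) :
    ∑ ν : Fin n, Ym n a lam j ν * z ^ (ν : ℕ)
      = (-(deriv (Npoly n a) (lam j)))⁻¹ * g n a lam j z := by
  rw [g, Finset.mul_sum]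
  exact Finset.sum_congr rfl fun ν _ => by simp [Ym, mul_assoc]

lemma Ym_mul_Xm (n : ℕ) (a : Fin n → ℝ) (lam : Fin n → ℂ)
    (hroot : ∀ i, Npoly n a (lam i) = 0) (hdist : Function.Injective lam)
    (hNp : ∀ i, deriv (Npoly n a) (lam i) ≠ 0) :
    Ym n a lam * Xm n lam = 1 := by
  ext j k
  rw [Matrix.mul_apply]
  have h1 : ∑ ν : Fin n, Ym n a lam j ν * Xm n lam ν k
      = (-(deriv (Npoly n a) (lam j)))⁻¹ * g n a lam j (lam k) := by
    rw [← Ym_row_dot]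
    exact Finset.sum_congr rfl fun ν _ => by simp [Xm]
  rw [h1]
  by_cases hjk : j = k
  · subst hjk
    rw [g_self, inv_mul_cancel₀ (neg_ne_zero.mpr (hNp j))]
    simp [Matrix.one_apply]
  · rw [g_root n a lam hroot hdist hjk]
    simp [Matrix.one_apply, hjk]

lemma Xm_mul_Ym (n : ℕ) (a : Fin n → ℝ) (lam : Fin n → ℂ)
    (hroot : ∀ i, Npoly n a (lam i) = 0) (hdist : Function.Injective lam)
    (hNp : ∀ i, deriv (Npoly n a) (lam i) ≠ 0) :
    Xm n lam * Ym n a lam = 1 :=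
  mul_eq_one_comm.mp (Ym_mul_Xm n a lam hroot hdist hNp)

lemma no_extra_root (n : ℕ) (hn : 0 < n) (a : Fin n → ℝ) (lam : Fin n → ℂ)
    (hroot : ∀ i, Npoly n a (lam i) = 0) (hdist : Function.Injective lam)
    (hNp : ∀ i, deriv (Npoly n a) (lam i) ≠ 0)
    (z : ℂ) (hz : Npoly n a z = 0) : ∃ j, z = lam j := by
  by_contra hno
  push_neg at hno
  have hg : ∀ j, g n a lam j z = 0 := by
    intro j
    have h := gen_id n a lam j z
    rw [hz, hroot] at h
    have hne : z - lam j ≠ 0 := sub_ne_zero.mpr (hno j)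
    rw [sub_self, neg_zero] at h
    rcases mul_eq_zero.mp h with h' | h'
    · exact h'
    · exact absurd h' hne
  set v : Fin n → ℂ := fun μ => z ^ (μ : ℕ) with hv
  have hYv : Ym n a lam *ᵥ v = 0 := by
    funext j
    rw [Matrix.mulVec, dotProduct]
    simpa using (Ym_row_dot n a lam j z).trans (by rw [hg j]; ring)
  have hveq : v = 0 := by
    have := congrArg (fun w => Xm n lam *ᵥ w) hYv
    simpa [Matrix.mulVec_mulVec, Xm_mul_Ym n a lam hroot hdist hNp] using this
  have := congrFun hveq ⟨0, hn⟩
  simp [hv] at this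

lemma Npoly_conj (n : ℕ) (a : Fin n → ℝ) (z : ℂ) :
    Npoly n a ((starRingEnd ℂ) z) = (starRingEnd ℂ) (Npoly n a z) := by
  simp [Npoly, map_add, map_sum, _root_.map_mul, map_pow, Complex.conj_ofReal]

lemma derivNpoly_conj (n : ℕ) (a : Fin n → ℝ) (z : ℂ) :
    deriv (Npoly n a) ((starRingEnd ℂ) z) = (starRingEnd ℂ) (deriv (Npoly n a) z) := by
  rw [deriv_Npoly, deriv_Npoly]
  simp [Npoly', map_add, map_sum, _root_.map_mul, map_pow, Complex.conj_ofReal]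

lemma yvec_conj (n : ℕ) (a : Fin n → ℝ) (lam : Fin n → ℂ) (i j : Fin n)
    (h : lam j = (starRingEnd ℂ) (lam i)) (μ : Fin n) :
    (starRingEnd ℂ) (yvec n a lam i μ) = yvec n a lam j μ := by
  simp [yvec, h, map_neg, map_add, map_sum, apply_ite (starRingEnd ℂ), _root_.map_mul, map_pow,
    Complex.conj_ofReal]

lemma exists_perm (n : ℕ) (hn : 0 < n) (a : Fin n → ℝ) (lam : Fin n → ℂ)
    (hroot : ∀ i, Npoly n a (lam i) = 0) (hdist : Function.Injective lam)
    (hNp : ∀ i, deriv (Npoly n a) (lam i) ≠ 0) :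
    ∃ f : Fin n → Fin n, Function.Bijective f ∧
      ∀ i, lam (f i) = (starRingEnd ℂ) (lam i) := by
  have hr : ∀ i : Fin n, ∃ j, (starRingEnd ℂ) (lam i) = lam j := by
    intro i
    refine no_extra_root n hn a lam hroot hdist hNp _ ?_
    rw [Npoly_conj, hroot, map_zero]
  choose f hf using hr
  have hinj : Function.Injective f := by
    intro i i' he
    have : (starRingEnd ℂ) (lam i) = (starRingEnd ℂ) (lam i') := by
      rw [hf i, hf i', he]
    exact hdist ((starRingEnd ℂ).injective this)
  exact ⟨f, Finite.injective_iff_bijective.mp hinj, fun i => (hf i).symm⟩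

/-- Key interpolation identity: `∑_j (c_j/(λ_k+λ_j)) y_j = -J y_k` (componentwise). -/
lemma keyH (n : ℕ) (a : Fin n → ℝ) (lam : Fin n → ℂ)
    (hroot : ∀ i, Npoly n a (lam i) = 0) (hdist : Function.Injective lam)
    (hNp : ∀ i, deriv (Npoly n a) (lam i) ≠ 0) (hsum : ∀ i j, lam i + lam j ≠ 0)
    (k : Fin n) (ν : Fin n) :
    ∑ j : Fin n, (Npoly n a (-(lam j)) / (-(deriv (Npoly n a) (lam j))) / (lam k + lam j))
        * yvec n a lam j ν
      = -((-1 : ℂ) ^ ((ν : ℕ) + 1) * yvec n a lam k ν) := by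
  set u : Fin n → ℂ := fun ν => ∑ j : Fin n,
    (Npoly n a (-(lam j)) / (-(deriv (Npoly n a) (lam j))) / (lam k + lam j))
      * yvec n a lam j ν with hu
  set v : Fin n → ℂ := fun ν => -((-1 : ℂ) ^ ((ν : ℕ) + 1) * yvec n a lam k ν) with hvdef
  have hX : u ᵥ* Xm n lam = v ᵥ* Xm n lam := by
    funext m
    rw [Matrix.vecMul, Matrix.vecMul]
    show ∑ ν, u ν * Xm n lam ν m = ∑ ν, v ν * Xm n lam ν m
    have hL : ∑ ν, u ν * Xm n lam ν m
        = Npoly n a (-(lam m)) / (lam k + lam m) := by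
      have swap : ∑ ν, u ν * Xm n lam ν m
          = ∑ j : Fin n, (Npoly n a (-(lam j)) / (-(deriv (Npoly n a) (lam j)))
              / (lam k + lam j)) * g n a lam j (lam m) := by
        rw [hu]
        simp only [Finset.sum_mul]
        rw [Finset.sum_comm]
        refine Finset.sum_congr rfl fun j _ => ?_
        rw [g, Finset.mul_sum]
        exact Finset.sum_congr rfl fun μ _ => by simp [Xm]; ring
      rw [swap]
      rw [Finset.sum_eq_single m]
      · rw [g_self]
        field_simp
        rw [mul_comm (Npoly n a (-(lam m)))]
        rw [mul_div_mul_left _ _ (hNp m)]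
      · intro j _ hjm
        rw [g_root n a lam hroot hdist hjm, mul_zero]
      · intro hm; exact absurd (Finset.mem_univ m) hm
    have hR : ∑ ν, v ν * Xm n lam ν m
        = Npoly n a (-(lam m)) / (lam k + lam m) := by
      have : ∑ ν, v ν * Xm n lam ν m = g n a lam k (-(lam m)) := by
        rw [g]
        refine Finset.sum_congr rfl fun μ _ => ?_
        rw [hvdef]
        simp only [Xm, Matrix.of_apply]
        rw [neg_pow (lam m)]
        ring
      rw [this, g_neg n a lam hroot hsum k m]
      rw [add_comm (lam m) (lam k)]
    rw [hL, hR]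
  have := congrArg (fun w => w ᵥ* Ym n a lam) hX
  simpa [Matrix.vecMul_vecMul, Xm_mul_Ym n a lam hroot hdist hNp] using congrFun this ν


def cc (n : ℕ) (a : Fin n → ℝ) (lam : Fin n → ℂ) (j : Fin n) : ℂ :=
  Npoly n a (-(lam j)) / (-(deriv (Npoly n a) (lam j)))

def wv (n : ℕ) (a : Fin n → ℝ) (lam : Fin n → ℂ) (j : Fin n) : Fin n → ℂ :=
  fun μ => (-1 : ℂ) ^ ((μ : ℕ) + 1) * yvec n a lam j μ

def PmM (n : ℕ) (a : Fin n → ℝ) (lam : Fin n → ℂ) : Matrix (Fin n) (Fin n) ℂ :=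
  ∑ j, cc n a lam j • Matrix.vecMulVec (wv n a lam j) (yvec n a lam j)

lemma smul_vecMulVec_mulVec (n : ℕ) (c : ℂ) (w y x : Fin n → ℂ) :
    (c • Matrix.vecMulVec w y) *ᵥ x = (c * (y ⬝ᵥ x)) • w := by
  funext μ
  simp only [Matrix.mulVec, dotProduct, Matrix.smul_apply, Matrix.vecMulVec_apply,
    Pi.smul_apply, smul_eq_mul]
  rw [Finset.mul_sum, Finset.sum_mul]
  exact Finset.sum_congr rfl fun ν _ => by ring

lemma dot_conjTranspose_self (n : ℕ) (M : Matrix (Fin n) (Fin n) ℂ) (x : Fin n → ℂ)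
    (hx : ∀ μ, (starRingEnd ℂ) (x μ) = x μ) :
    x ⬝ᵥ (Mᴴ *ᵥ x) = (starRingEnd ℂ) (x ⬝ᵥ (M *ᵥ x)) := by
  simp only [dotProduct, Matrix.mulVec, map_sum, _root_.map_mul,
    Matrix.conjTranspose_apply, Complex.star_def, hx, Finset.mul_sum]
  rw [Finset.sum_comm]
  refine Finset.sum_congr rfl fun p _ => Finset.sum_congr rfl fun q _ => by ring

lemma Jmat_vecMulVec (n : ℕ) (a : Fin n → ℝ) (lam : Fin n → ℂ) (j : Fin n) :
    Jmat n * Matrix.vecMulVec (yvec n a lam j) (yvec n a lam j)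
      = Matrix.vecMulVec (wv n a lam j) (yvec n a lam j) := by
  ext μ ν
  simp [Jmat, Matrix.mul_apply, Matrix.diagonal_apply, Matrix.vecMulVec_apply, ite_mul,
    zero_mul, Finset.sum_ite_eq, wv, mul_assoc]

lemma dot_yx (n : ℕ) (a : Fin n → ℝ) (lam : Fin n → ℂ) (j k : Fin n) :
    yvec n a lam j ⬝ᵥ xvec n lam k = g n a lam j (lam k) := rfl

lemma dot_xw (n : ℕ) (a : Fin n → ℝ) (lam : Fin n → ℂ)
    (hroot : ∀ i, Npoly n a (lam i) = 0) (hsum : ∀ i j, lam i + lam j ≠ 0)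
    (k j : Fin n) :
    xvec n lam k ⬝ᵥ wv n a lam j = -(Npoly n a (-(lam k)) / (lam k + lam j)) := by
  have h1 : xvec n lam k ⬝ᵥ wv n a lam j = -g n a lam j (-(lam k)) := by
    rw [g, ← Finset.sum_neg_distrib]
    refine Finset.sum_congr rfl fun μ _ => ?_
    simp only [xvec, wv]
    rw [neg_pow (lam k)]
    ring
  rw [h1, g_neg n a lam hroot hsum j k]

lemma sum_mulVec' {n m : ℕ} (M : Fin m → Matrix (Fin n) (Fin n) ℂ) (v : Fin n → ℂ) :
    (∑ j, M j) *ᵥ v = ∑ j, M j *ᵥ v := by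
  funext μ
  simp only [Matrix.mulVec, dotProduct, Matrix.sum_apply, Finset.sum_apply, Finset.sum_mul]
  rw [Finset.sum_comm]

lemma dot_sum' {n m : ℕ} (z : Fin n → ℂ) (F : Fin m → Fin n → ℂ) :
    z ⬝ᵥ (∑ j, F j) = ∑ j, z ⬝ᵥ F j := by
  simp only [dotProduct, Finset.sum_apply, Finset.mul_sum]
  rw [Finset.sum_comm]

lemma dot_PmM (n : ℕ) (a : Fin n → ℝ) (lam : Fin n → ℂ) (z v : Fin n → ℂ) :
    z ⬝ᵥ (PmM n a lam *ᵥ v)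
      = ∑ j, cc n a lam j * (yvec n a lam j ⬝ᵥ v) * (z ⬝ᵥ wv n a lam j) := by
  rw [PmM, sum_mulVec', dot_sum']
  refine Finset.sum_congr rfl fun j _ => ?_
  rw [smul_vecMulVec_mulVec, dotProduct_smul, smul_eq_mul]

lemma keysum (n : ℕ) (a : Fin n → ℝ) (lam : Fin n → ℂ)
    (hroot : ∀ i, Npoly n a (lam i) = 0) (hdist : Function.Injective lam)
    (hNp : ∀ i, deriv (Npoly n a) (lam i) ≠ 0) (hsum : ∀ i j, lam i + lam j ≠ 0)
    (k : Fin n) (v : Fin n → ℂ) :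
    ∑ j, (cc n a lam j / (lam k + lam j)) * (yvec n a lam j ⬝ᵥ v)
      = -(wv n a lam k ⬝ᵥ v) := by
  have h1 : ∀ ν, ∑ j, (cc n a lam j / (lam k + lam j)) * yvec n a lam j ν
      = -wv n a lam k ν := by
    intro ν
    have := keyH n a lam hroot hdist hNp hsum k ν
    simpa [cc, wv] using this
  calc ∑ j, (cc n a lam j / (lam k + lam j)) * (yvec n a lam j ⬝ᵥ v)
      = ∑ j, ∑ ν, (cc n a lam j / (lam k + lam j)) * yvec n a lam j ν * v ν := by
        refine Finset.sum_congr rfl fun j _ => ?_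
        rw [dotProduct, Finset.mul_sum]
        exact Finset.sum_congr rfl fun ν _ => by ring
    _ = ∑ ν, (∑ j, (cc n a lam j / (lam k + lam j)) * yvec n a lam j ν) * v ν := by
        rw [Finset.sum_comm]
        exact Finset.sum_congr rfl fun ν _ => (Finset.sum_mul _ _ _).symm
    _ = ∑ ν, (-wv n a lam k ν) * v ν := by
        exact Finset.sum_congr rfl fun ν _ => by rw [h1]
    _ = -(wv n a lam k ⬝ᵥ v) := by
        rw [dotProduct, ← Finset.sum_neg_distrib]
        exact Finset.sum_congr rfl fun ν _ => by ring

lemma xk_dot_PmM (n : ℕ) (a : Fin n → ℝ) (lam : Fin n → ℂ)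
    (hroot : ∀ i, Npoly n a (lam i) = 0) (hdist : Function.Injective lam)
    (hNp : ∀ i, deriv (Npoly n a) (lam i) ≠ 0) (hsum : ∀ i j, lam i + lam j ≠ 0)
    (k : Fin n) (v : Fin n → ℂ) :
    xvec n lam k ⬝ᵥ (PmM n a lam *ᵥ v)
      = Npoly n a (-(lam k)) * (wv n a lam k ⬝ᵥ v) := by
  rw [dot_PmM]
  calc ∑ j, cc n a lam j * (yvec n a lam j ⬝ᵥ v) * (xvec n lam k ⬝ᵥ wv n a lam j)
      = ∑ j, (-(Npoly n a (-(lam k))))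
          * ((cc n a lam j / (lam k + lam j)) * (yvec n a lam j ⬝ᵥ v)) := by
        refine Finset.sum_congr rfl fun j _ => ?_
        rw [dot_xw n a lam hroot hsum k j]
        ring
    _ = (-(Npoly n a (-(lam k))))
          * ∑ j, (cc n a lam j / (lam k + lam j)) * (yvec n a lam j ⬝ᵥ v) := by
        rw [Finset.mul_sum]
    _ = _ := by
        rw [keysum n a lam hroot hdist hNp hsum k v]
        ring

lemma PmM_dot_xi (n : ℕ) (a : Fin n → ℝ) (lam : Fin n → ℂ)
    (hroot : ∀ i, Npoly n a (lam i) = 0) (hdist : Function.Injective lam)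
    (i : Fin n) (z : Fin n → ℂ) :
    z ⬝ᵥ (PmM n a lam *ᵥ xvec n lam i)
      = cc n a lam i * (-(deriv (Npoly n a) (lam i))) * (z ⬝ᵥ wv n a lam i) := by
  rw [dot_PmM]
  rw [Finset.sum_eq_single i]
  · rw [dot_yx, g_self]
  · intro j _ hji
    rw [dot_yx, g_root n a lam hroot hdist hji]
    ring
  · intro hm
    exact absurd (Finset.mem_univ i) hm

lemma Nneg_conj (n : ℕ) (a : Fin n → ℝ) (lam : Fin n → ℂ) (i j : Fin n)
    (h : lam j = (starRingEnd ℂ) (lam i)) :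
    Npoly n a (-(lam j)) = (starRingEnd ℂ) (Npoly n a (-(lam i))) := by
  rw [h, ← map_neg (starRingEnd ℂ), Npoly_conj]

lemma dNp_conj (n : ℕ) (a : Fin n → ℝ) (lam : Fin n → ℂ) (i j : Fin n)
    (h : lam j = (starRingEnd ℂ) (lam i)) :
    deriv (Npoly n a) (lam j) = (starRingEnd ℂ) (deriv (Npoly n a) (lam i)) := by
  rw [h, derivNpoly_conj]

lemma cc_conj (n : ℕ) (a : Fin n → ℝ) (lam : Fin n → ℂ) (i j : Fin n)
    (h : lam j = (starRingEnd ℂ) (lam i)) :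
    cc n a lam j = (starRingEnd ℂ) (cc n a lam i) := by
  rw [cc, cc, Nneg_conj n a lam i j h, dNp_conj n a lam i j h, map_div₀, map_neg]

lemma ydot_conj (n : ℕ) (a : Fin n → ℝ) (lam : Fin n → ℂ) (i j : Fin n)
    (h : lam j = (starRingEnd ℂ) (lam i)) (v : Fin n → ℂ)
    (hv : ∀ μ, (starRingEnd ℂ) (v μ) = v μ) :
    yvec n a lam j ⬝ᵥ v = (starRingEnd ℂ) (yvec n a lam i ⬝ᵥ v) := by
  rw [dotProduct, dotProduct, map_sum]
  exact Finset.sum_congr rfl fun μ _ => by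
    rw [_root_.map_mul, hv, yvec_conj n a lam i j h]

lemma wdot_conj (n : ℕ) (a : Fin n → ℝ) (lam : Fin n → ℂ) (i j : Fin n)
    (h : lam j = (starRingEnd ℂ) (lam i)) (v : Fin n → ℂ)
    (hv : ∀ μ, (starRingEnd ℂ) (v μ) = v μ) :
    wv n a lam j ⬝ᵥ v = (starRingEnd ℂ) (wv n a lam i ⬝ᵥ v) := by
  rw [dotProduct, dotProduct, map_sum]
  refine Finset.sum_congr rfl fun μ _ => ?_
  rw [_root_.map_mul, hv, wv, wv, _root_.map_mul, yvec_conj n a lam i j h, map_pow, map_neg,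
    _root_.map_one]

end Aux

/-- Spectral decomposition of the minimum control energy:
`x_0ᵀ P⁻ x_0 = ∑ i x_0ᵀ P̃_i^{-C} x_0`, and
`x_0ᵀ P̃_i^{-C} x_0 = ½ (x_{i0}ᴴ P⁻ x_0 + x_0ᴴ P⁻ x_{i0})` with `x_{i0} = R_i x_0`. -/
theorem stmt12 (n : ℕ) (hn : 0 < n) (a : Fin n → ℝ) (lam : Fin n → ℂ)
    (hroot : ∀ i, Npoly n a (lam i) = 0)
    (hdist : Function.Injective lam)
    (hNp : ∀ i, deriv (Npoly n a) (lam i) ≠ 0)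
    (hsum : ∀ i j, lam i + lam j ≠ 0)
    (Phatinv : Fin n → Matrix (Fin n) (Fin n) ℂ)
    (hPhatinv : Phatinv = fun j => (Npoly n a (-(lam j)) / (-(deriv (Npoly n a) (lam j)))) •
        (Jmat n * Matrix.vecMulVec (yvec n a lam j) (yvec n a lam j)))
    (Pm : Matrix (Fin n) (Fin n) ℂ) (hPm : Pm = ∑ j, Phatinv j)
    (x0 : Fin n → ℝ) (x0c : Fin n → ℂ) (hx0c : x0c = fun μ => (x0 μ : ℂ))
    (xi0 : Fin n → Fin n → ℂ) (hxi0 : xi0 = fun i => Rres n a lam i *ᵥ x0c) :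
    x0c ⬝ᵥ (Pm *ᵥ x0c) = (∑ i, x0c ⬝ᵥ (hermPart (Phatinv i) *ᵥ x0c)) ∧
      ∀ i, x0c ⬝ᵥ (hermPart (Phatinv i) *ᵥ x0c) =
        (2 : ℂ)⁻¹ * ((fun μ => (starRingEnd ℂ) (xi0 i μ)) ⬝ᵥ (Pm *ᵥ x0c) +
          (fun μ => (starRingEnd ℂ) (x0c μ)) ⬝ᵥ (Pm *ᵥ xi0 i)) := by
  obtain ⟨f, hfb, hf⟩ := Aux.exists_perm n hn a lam hroot hdist hNp
  have hx0r : ∀ μ, (starRingEnd ℂ) (x0c μ) = x0c μ := by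
    intro μ; rw [hx0c]; exact Complex.conj_ofReal _
  have hPhat' : ∀ i, Phatinv i
      = Aux.cc n a lam i • Matrix.vecMulVec (Aux.wv n a lam i) (yvec n a lam i) := by
    intro i
    rw [hPhatinv]
    show (Npoly n a (-(lam i)) / (-(deriv (Npoly n a) (lam i)))) •
        (Jmat n * Matrix.vecMulVec (yvec n a lam i) (yvec n a lam i)) = _
    rw [Aux.Jmat_vecMulVec]
    rfl
  have hPmM : Pm = Aux.PmM n a lam := by
    rw [hPm, Aux.PmM]
    exact Finset.sum_congr rfl fun j _ => hPhat' j
  have dotT : ∀ i, x0c ⬝ᵥ (Phatinv i *ᵥ x0c)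
      = Aux.cc n a lam i * (yvec n a lam i ⬝ᵥ x0c) * (x0c ⬝ᵥ Aux.wv n a lam i) := by
    intro i
    rw [hPhat' i, Aux.smul_vecMulVec_mulVec, dotProduct_smul, smul_eq_mul]
  have dotHerm : ∀ i, x0c ⬝ᵥ (hermPart (Phatinv i) *ᵥ x0c)
      = 2⁻¹ * (x0c ⬝ᵥ (Phatinv i *ᵥ x0c)
          + (starRingEnd ℂ) (x0c ⬝ᵥ (Phatinv i *ᵥ x0c))) := by
    intro i
    rw [hermPart, Matrix.smul_mulVec, Matrix.add_mulVec, dotProduct_smul,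
      dotProduct_add, Aux.dot_conjTranspose_self n (Phatinv i) x0c hx0r, smul_eq_mul]
  have hconjT : ∀ i, (starRingEnd ℂ) (Aux.cc n a lam i * (yvec n a lam i ⬝ᵥ x0c)
        * (x0c ⬝ᵥ Aux.wv n a lam i))
      = Aux.cc n a lam (f i) * (yvec n a lam (f i) ⬝ᵥ x0c)
        * (x0c ⬝ᵥ Aux.wv n a lam (f i)) := by
    intro i
    rw [_root_.map_mul, _root_.map_mul]
    rw [← Aux.cc_conj n a lam i (f i) (hf i),
      ← Aux.ydot_conj n a lam i (f i) (hf i) x0c hx0r]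
    rw [dotProduct_comm x0c, dotProduct_comm x0c,
      ← Aux.wdot_conj n a lam i (f i) (hf i) x0c hx0r]
  have hmain : x0c ⬝ᵥ (Pm *ᵥ x0c)
      = ∑ j, Aux.cc n a lam j * (yvec n a lam j ⬝ᵥ x0c) * (x0c ⬝ᵥ Aux.wv n a lam j) := by
    rw [hPmM, Aux.dot_PmM]
  have hxi0' : ∀ i, xi0 i
      = ((-(deriv (Npoly n a) (lam i)))⁻¹ * (yvec n a lam i ⬝ᵥ x0c)) • xvec n lam i := by
    intro i
    rw [hxi0]
    show Rres n a lam i *ᵥ x0c = _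
    rw [Rres, Aux.smul_vecMulVec_mulVec]
  have hdot2 : ∀ i, x0c ⬝ᵥ (Pm *ᵥ xi0 i)
      = Aux.cc n a lam i * (yvec n a lam i ⬝ᵥ x0c) * (x0c ⬝ᵥ Aux.wv n a lam i) := by
    intro i
    rw [hxi0' i, Matrix.mulVec_smul, dotProduct_smul, hPmM,
      Aux.PmM_dot_xi n a lam hroot hdist i x0c, smul_eq_mul]
    have h1 : (-(deriv (Npoly n a) (lam i)))⁻¹ * (-(deriv (Npoly n a) (lam i))) = 1 :=
      inv_mul_cancel₀ (neg_ne_zero.mpr (hNp i))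
    linear_combination (Aux.cc n a lam i * (yvec n a lam i ⬝ᵥ x0c)
      * (x0c ⬝ᵥ Aux.wv n a lam i)) * h1
  have hdot1 : ∀ i, (fun μ => (starRingEnd ℂ) (xi0 i μ)) ⬝ᵥ (Pm *ᵥ x0c)
      = (starRingEnd ℂ) (Aux.cc n a lam i * (yvec n a lam i ⬝ᵥ x0c)
          * (x0c ⬝ᵥ Aux.wv n a lam i)) := by
    intro i
    have hcx : (fun μ => (starRingEnd ℂ) (xi0 i μ))
        = (starRingEnd ℂ) ((-(deriv (Npoly n a) (lam i)))⁻¹ * (yvec n a lam i ⬝ᵥ x0c))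
            • xvec n lam (f i) := by
      funext μ
      rw [hxi0' i]
      simp only [Pi.smul_apply, smul_eq_mul, _root_.map_mul]
      congr 1
      show (starRingEnd ℂ) (lam i ^ (μ : ℕ)) = lam (f i) ^ (μ : ℕ)
      rw [map_pow, hf i]
    rw [hcx, smul_dotProduct, smul_eq_mul, hPmM,
      Aux.xk_dot_PmM n a lam hroot hdist hNp hsum (f i) x0c]
    rw [Aux.Nneg_conj n a lam i (f i) (hf i),
      Aux.wdot_conj n a lam i (f i) (hf i) x0c hx0r]
    simp only [← _root_.map_mul]
    congr 1
    rw [dotProduct_comm x0c, Aux.cc, div_eq_mul_inv]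
    ring
  constructor
  · rw [hmain, Finset.sum_congr rfl (fun i _ => (dotHerm i).trans (by rw [dotT i]))]
    rw [← Finset.mul_sum, Finset.sum_add_distrib]
    have h2 : ∑ i, (starRingEnd ℂ) (Aux.cc n a lam i * (yvec n a lam i ⬝ᵥ x0c)
          * (x0c ⬝ᵥ Aux.wv n a lam i))
        = ∑ i, Aux.cc n a lam i * (yvec n a lam i ⬝ᵥ x0c) * (x0c ⬝ᵥ Aux.wv n a lam i) := by
      rw [Finset.sum_congr rfl (fun i _ => hconjT i)]
      exact hfb.sum_comp
        (fun j => Aux.cc n a lam j * (yvec n a lam j ⬝ᵥ x0c) * (x0c ⬝ᵥ Aux.wv n a lam j))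
    rw [h2]
    ring
  · intro i
    have hx : (fun μ => (starRingEnd ℂ) (x0c μ)) = x0c := funext hx0r
    rw [dotHerm i, dotT i, hdot1 i, hx, hdot2 i]
    ring

end
end

section
/- The matrix-valued function P(t) := Σ_{i=1}^{p} Σ_{k=1}^{n_i} Â_k^{(i)} B B^T [ (−λ_i I − A^T)^{−k} − Σ_{l=1}^{k} (−λ_i I − A^T)^{−l} (t^{k−l}/(k−l)!) exp((λ_i I + A^T) t) ] satisfies P(0) = 0 and, for every t ∈ ℝ, P is differentiable at t with derivative P'(t) = A P(t) + P(t) A^T + B B^T, where exp denotes the matrix exponential. -/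
open Matrix Finset

noncomputable section

section Stmt18Linfty
attribute [local instance] Matrix.linftyOpNormedRing Matrix.linftyOpNormedAlgebra

theorem stmt18_entryDeriv (d : ℕ) (N : Matrix (Fin d) (Fin d) ℂ) (t : ℝ) (i j : Fin d) :
    HasDerivAt (fun s : ℝ => NormedSpace.exp ((s:ℂ) • N) i j)
      ((N * NormedSpace.exp ((t:ℂ) • N)) i j) t := by
  have h : HasDerivAt (fun s : ℝ => NormedSpace.exp ((s:ℂ) • N))
      (N * NormedSpace.exp ((t:ℂ) • N)) t := by
    have h0 := (hasDerivAt_exp_smul_const' (𝕂 := ℂ) N (t:ℂ)).scomp t Complex.ofRealCLM.hasDerivAt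
    simp [Function.comp_def] at h0
    exact h0
  let L : Matrix (Fin d) (Fin d) ℂ →L[ℂ] ℂ :=
    LinearMap.toContinuousLinearMap (Matrix.entryLinearMap ℂ ℂ i j)
  exact ((L.restrictScalars ℝ).hasFDerivAt.comp_hasDerivAt t h)

end Stmt18Linfty

theorem stmt18_sumIcc {M : Type*} [AddCommMonoid M] (f : ℕ → M) (k : ℕ) :
    ∑ l ∈ Finset.Icc 1 k, f l = ∑ j ∈ Finset.range k, f (1 + j) := by
  rw [← Finset.Ico_add_one_right_eq_Icc, Finset.sum_Ico_eq_sum_range]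
  simp

theorem stmt18_keyQ (d : ℕ) (N W : Matrix (Fin d) (Fin d) ℂ) (hWN : W * N = -1)
    (E : Matrix (Fin d) (Fin d) ℂ) (hNE : E * N = N * E) (k : ℕ) (hk : 1 ≤ k) (t : ℝ) :
    (W ^ k - ∑ l ∈ Finset.Icc 1 k, ((t:ℂ) ^ (k-l) / ((k-l).factorial : ℂ)) • (W ^ l * E)) * N
      = ((t:ℂ) ^ (k-1) / ((k-1).factorial : ℂ)) • E -
        (W ^ (k-1) - ∑ l ∈ Finset.Icc 1 (k-1),
          ((t:ℂ) ^ (k-1-l) / ((k-1-l).factorial : ℂ)) • (W ^ l * E)) := by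
  obtain ⟨K, rfl⟩ : ∃ K, k = K + 1 := ⟨k - 1, (Nat.succ_pred_eq_of_pos hk).symm⟩
  simp only [Nat.add_sub_cancel]
  rw [sub_mul, Finset.sum_mul]
  have h1 : W ^ (K+1) * N = -(W ^ K) := by
    rw [pow_succ, mul_assoc, hWN, mul_neg_one]
  have h2 : ∀ l ∈ Finset.Icc 1 (K+1),
      (((t:ℂ) ^ (K+1-l) / ((K+1-l).factorial : ℂ)) • (W ^ l * E)) * N
        = -(((t:ℂ) ^ (K+1-l) / ((K+1-l).factorial : ℂ)) • (W ^ (l-1) * E)) := by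
    intro l hl
    obtain ⟨j, rfl⟩ : ∃ j, l = j + 1 :=
      ⟨l - 1, (Nat.succ_pred_eq_of_pos (Finset.mem_Icc.mp hl).1).symm⟩
    have key : (W ^ (j+1) * E) * N = -(W ^ j * E) := by
      calc (W ^ (j+1) * E) * N = W ^ (j+1) * (N * E) := by rw [mul_assoc, hNE]
        _ = (W ^ (j+1) * N) * E := by rw [mul_assoc]
        _ = -(W ^ j * E) := by
            rw [pow_succ, mul_assoc (W ^ j) W N, hWN, mul_neg_one, neg_mul]
    rw [smul_mul_assoc, key, smul_neg, Nat.add_sub_cancel]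
  rw [Finset.sum_congr rfl h2, h1, Finset.sum_neg_distrib]
  have h3 : ∑ l ∈ Finset.Icc 1 (K+1),
      ((t:ℂ) ^ (K+1-l) / ((K+1-l).factorial : ℂ)) • (W ^ (l-1) * E)
      = ((t:ℂ) ^ K / (K.factorial : ℂ)) • E +
        ∑ l ∈ Finset.Icc 1 K, ((t:ℂ) ^ (K-l) / ((K-l).factorial : ℂ)) • (W ^ l * E) := by
    rw [stmt18_sumIcc, stmt18_sumIcc, Finset.sum_range_succ']
    rw [add_comm]
    congr 1
    · simp
    · apply Finset.sum_congr rfl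
      intro j hj
      have e1 : K + 1 - (1 + (j + 1)) = K - (1 + j) := by omega
      have e2 : 1 + (j + 1) - 1 = 1 + j := by omega
      rw [e1, e2]
  rw [h3]
  abel

theorem stmt18_inner (d : ℕ) (A G : Matrix (Fin d) (Fin d) ℂ) (lam0 : ℂ)
    (W E : Matrix (Fin d) (Fin d) ℂ)
    (hWN : W * (lam0 • (1 : Matrix (Fin d) (Fin d) ℂ) + Aᵀ) = -1)
    (hNE : E * (lam0 • (1 : Matrix (Fin d) (Fin d) ℂ) + Aᵀ)
      = (lam0 • (1 : Matrix (Fin d) (Fin d) ℂ) + Aᵀ) * E)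
    (Ah : ℕ → Matrix (Fin d) (Fin d) ℂ) (ni : ℕ) (hni : 1 ≤ ni)
    (htop : A * Ah ni = lam0 • Ah ni)
    (hchain : ∀ k, 1 ≤ k → k < ni → A * Ah k = lam0 • Ah k + Ah (k+1))
    (t : ℝ) :
    ∑ k ∈ Finset.Icc 1 ni,
      (A * (Ah k * G * (W^k - ∑ l ∈ Finset.Icc 1 k,
          ((t:ℂ)^(k-l)/((k-l).factorial : ℂ)) • (W^l * E)))
        + (Ah k * G * (W^k - ∑ l ∈ Finset.Icc 1 k,
          ((t:ℂ)^(k-l)/((k-l).factorial : ℂ)) • (W^l * E))) * Aᵀ)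
      = (∑ k ∈ Finset.Icc 1 ni,
          Ah k * G * (((t:ℂ)^(k-1)/((k-1).factorial : ℂ)) • E)) - Ah 1 * G := by
  set Nn : Matrix (Fin d) (Fin d) ℂ := lam0 • (1 : Matrix (Fin d) (Fin d) ℂ) + Aᵀ with hNn
  set Q : ℕ → Matrix (Fin d) (Fin d) ℂ :=
    fun k => W^k - ∑ l ∈ Finset.Icc 1 k, ((t:ℂ)^(k-l)/((k-l).factorial : ℂ)) • (W^l * E) with hQ
  set c : ℕ → ℂ := fun j => (t:ℂ)^j/(j.factorial : ℂ) with hc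
  have hQ0 : Q 0 = 1 := by
    rw [hQ]
    simp [Finset.Icc_eq_empty_of_lt]
  have hterm : ∀ k ∈ Finset.Icc 1 ni,
      A * (Ah k * G * Q k) + (Ah k * G * Q k) * Aᵀ
      = ((A * Ah k - lam0 • Ah k) * G * Q k + Ah k * G * (c (k-1) • E))
          - Ah k * G * Q (k-1) := by
    intro k hk
    have hk1 : 1 ≤ k := (Finset.mem_Icc.mp hk).1
    have hQN : Q k * Nn = c (k-1) • E - Q (k-1) :=
      stmt18_keyQ d Nn W hWN E hNE k hk1 t
    have hAT : (Aᵀ : Matrix (Fin d) (Fin d) ℂ) = Nn - lam0 • 1 := by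
      rw [hNn]; abel
    have e1 : (Ah k * G * Q k) * Aᵀ
        = Ah k * G * (c (k-1) • E) - Ah k * G * Q (k-1) - lam0 • (Ah k * G * Q k) := by
      rw [hAT, mul_sub, mul_assoc, hQN,
        mul_smul_comm lam0 (Ah k * G * Q k) 1, mul_one, mul_sub]
    have e2 : A * (Ah k * G * Q k) = (A * Ah k) * G * Q k := by
      rw [← mul_assoc, ← mul_assoc]
    have e3 : (A * Ah k - lam0 • Ah k) * G * Q k
        = (A * Ah k) * G * Q k - lam0 • (Ah k * G * Q k) := by
      rw [sub_mul, sub_mul, smul_mul_assoc, smul_mul_assoc]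
    rw [e1, e2, e3]
    abel
  rw [Finset.sum_congr rfl hterm]
  obtain ⟨NI, rfl⟩ : ∃ NI, ni = NI + 1 := ⟨ni - 1, (Nat.succ_pred_eq_of_pos hni).symm⟩
  have hv : ∑ k ∈ Finset.Icc 1 (NI+1), (A * Ah k - lam0 • Ah k) * G * Q k
      = (∑ k ∈ Finset.Icc 1 (NI+1), Ah k * G * Q (k-1)) - Ah 1 * G := by
    rw [stmt18_sumIcc (M := Matrix (Fin d) (Fin d) ℂ),
        stmt18_sumIcc (M := Matrix (Fin d) (Fin d) ℂ),
        Finset.sum_range_succ, Finset.sum_range_succ']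
    have hlast : (A * Ah (1 + NI) - lam0 • Ah (1 + NI)) * G * Q (1 + NI) = 0 := by
      have h' : (1 + NI) = NI + 1 := by omega
      rw [h', htop, sub_self, zero_mul, zero_mul]
    have hfirst : Ah (1 + 0) * G * Q (1 + 0 - 1) = Ah 1 * G := by
      norm_num [hQ0]
    rw [hlast, hfirst, add_zero]
    have hmid : ∀ j ∈ Finset.range NI,
        (A * Ah (1 + j) - lam0 • Ah (1 + j)) * G * Q (1 + j)
        = Ah (1 + (j+1)) * G * Q (1 + (j+1) - 1) := by
      intro j hj
      have hj' : j < NI := Finset.mem_range.mp hj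
      have hch := hchain (1+j) (by omega) (by omega)
      rw [hch]
      have e1 : lam0 • Ah (1+j) + Ah (1+j+1) - lam0 • Ah (1+j) = Ah (1+j+1) := by abel
      rw [e1]
      have e2 : 1 + (j+1) - 1 = 1 + j := by omega
      have e3 : 1 + (j+1) = 1 + j + 1 := by omega
      rw [e2, e3]
    rw [Finset.sum_congr rfl hmid]
    abel
  rw [Finset.sum_sub_distrib, Finset.sum_add_distrib, hv]
  simp only [hc]
  abel

attribute [local instance] Matrix.normedAddCommGroup Matrix.normedSpace

theorem stmt18_expDeriv (d : ℕ) (N : Matrix (Fin d) (Fin d) ℂ) (t : ℝ) :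
    HasDerivAt (fun s : ℝ => NormedSpace.exp ((s:ℂ) • N))
      (N * NormedSpace.exp ((t:ℂ) • N)) t := by
  refine hasDerivAt_pi.2 fun i => hasDerivAt_pi.2 fun j => ?_
  exact stmt18_entryDeriv d N t i j

theorem stmt18_constMul (d : ℕ) (C : Matrix (Fin d) (Fin d) ℂ)
    {f : ℝ → Matrix (Fin d) (Fin d) ℂ} {f' : Matrix (Fin d) (Fin d) ℂ} {t : ℝ}
    (hf : HasDerivAt f f' t) :
    HasDerivAt (fun s => C * f s) (C * f') t := by
  let L : Matrix (Fin d) (Fin d) ℂ →L[ℂ] Matrix (Fin d) (Fin d) ℂ :=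
    LinearMap.toContinuousLinearMap (LinearMap.mulLeft ℂ C)
  exact ((L.restrictScalars ℝ).hasFDerivAt.comp_hasDerivAt t hf)

theorem stmt18_coefDeriv (j : ℕ) (t : ℝ) :
    HasDerivAt (fun s : ℝ => (s:ℂ) ^ j / (j.factorial : ℂ))
      (if j = 0 then 0 else (t:ℂ) ^ (j-1) / ((j-1).factorial : ℂ)) t := by
  rcases Nat.eq_zero_or_pos j with h | h
  · subst h
    simp only [pow_zero, Nat.factorial_zero, Nat.cast_one, div_one, if_pos rfl]
    exact hasDerivAt_const t 1
  · have h0 : (j : ℂ) ≠ 0 := Nat.cast_ne_zero.mpr h.ne'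
    have hd := ((hasDerivAt_pow j (t:ℂ)).comp_ofReal).div_const (j.factorial : ℂ)
    rw [if_neg h.ne']
    convert hd using 1
    case e'_4 => rfl
    have hfac : (j.factorial : ℂ) = (j : ℂ) * ((j-1).factorial : ℂ) := by
      rw [← Nat.cast_mul, ← Nat.succ_pred_eq_of_pos h]
      simp [Nat.factorial_succ, Nat.succ_pred_eq_of_pos h]
    rw [hfac]
    have h1 : ((j-1).factorial : ℂ) ≠ 0 := Nat.cast_ne_zero.mpr (Nat.factorial_ne_zero _)
    field_simp

theorem stmt18_bracketZero (d : ℕ) (N W : Matrix (Fin d) (Fin d) ℂ) (k : ℕ) (hk : 1 ≤ k) :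
    W ^ k - ∑ l ∈ Finset.Icc 1 k,
        ((((0:ℝ)):ℂ) ^ (k-l) / ((k-l).factorial : ℂ)) •
          (W ^ l * NormedSpace.exp ((((0:ℝ)):ℂ) • N)) = 0 := by
  have he : NormedSpace.exp ((((0:ℝ)):ℂ) • N) = 1 := by
    simp [NormedSpace.exp_zero]
  rw [he]
  rw [Finset.sum_eq_single k]
  · simp
  · intro l hl hlk
    have : k - l ≠ 0 := by
      have := (Finset.mem_Icc.mp hl).2
      omega
    simp [zero_pow this]
  · intro h
    exact absurd (Finset.mem_Icc.mpr ⟨hk, le_refl k⟩) h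

theorem stmt18_bracketDeriv (d : ℕ) (N W : Matrix (Fin d) (Fin d) ℂ)
    (hWN : W * N = -1) (k : ℕ) (hk : 1 ≤ k) (t : ℝ) :
    HasDerivAt (fun s : ℝ => W ^ k - ∑ l ∈ Finset.Icc 1 k,
        ((s:ℂ) ^ (k-l) / ((k-l).factorial : ℂ)) • (W ^ l * NormedSpace.exp ((s:ℂ) • N)))
      (((t:ℂ) ^ (k-1) / ((k-1).factorial : ℂ)) • NormedSpace.exp ((t:ℂ) • N)) t := by
  set E := NormedSpace.exp ((t:ℂ) • N) with hE
  have hsum : HasDerivAt (fun s : ℝ => ∑ l ∈ Finset.Icc 1 k,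
      ((s:ℂ) ^ (k-l) / ((k-l).factorial : ℂ)) • (W ^ l * NormedSpace.exp ((s:ℂ) • N)))
      (∑ l ∈ Finset.Icc 1 k,
        (((t:ℂ) ^ (k-l) / ((k-l).factorial : ℂ)) • (W ^ l * (N * E)) +
          (if k - l = 0 then 0 else (t:ℂ) ^ (k-l-1) / ((k-l-1).factorial : ℂ)) • (W ^ l * E))) t := by
    apply HasDerivAt.fun_sum
    intro l _
    exact (stmt18_coefDeriv (k-l) t).smul (stmt18_constMul d (W ^ l) (stmt18_expDeriv d N t))
  have h := (hasDerivAt_const t (W ^ k)).fun_sub hsum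
  convert h using 1
  case e'_4 => rfl
  case e'_5 => rfl
  case e'_6 => rfl
  obtain ⟨K, rfl⟩ : ∃ K, k = K + 1 := ⟨k - 1, (Nat.succ_pred_eq_of_pos hk).symm⟩
  have hterm : ∀ l ∈ Finset.Icc 1 (K+1),
      (((t:ℂ) ^ (K+1-l) / ((K+1-l).factorial : ℂ)) • (W ^ l * (N * E)) +
        (if K+1-l = 0 then 0 else (t:ℂ) ^ (K+1-l-1) / ((K+1-l-1).factorial : ℂ)) • (W ^ l * E))
      = (-(((t:ℂ) ^ (K+1-l) / ((K+1-l).factorial : ℂ)) • (W ^ (l-1) * E)) +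
        (if K+1-l = 0 then 0 else (t:ℂ) ^ (K+1-l-1) / ((K+1-l-1).factorial : ℂ)) • (W ^ l * E)) := by
    intro l hl
    obtain ⟨j, rfl⟩ : ∃ j, l = j + 1 :=
      ⟨l - 1, (Nat.succ_pred_eq_of_pos (Finset.mem_Icc.mp hl).1).symm⟩
    have key : W ^ (j+1) * (N * E) = -(W ^ j * E) := by
      rw [pow_succ, mul_assoc, ← mul_assoc W N E, hWN, neg_one_mul, mul_neg]
    rw [key, smul_neg, Nat.add_sub_cancel]
  rw [Finset.sum_congr rfl hterm]
  rw [stmt18_sumIcc (M := Matrix (Fin d) (Fin d) ℂ)]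
  rw [Finset.sum_add_distrib]
  have hA : ∑ j ∈ Finset.range (K+1),
      -(((t:ℂ) ^ (K+1-(1+j)) / ((K+1-(1+j)).factorial : ℂ)) • (W ^ (1+j-1) * E))
      = -(((t:ℂ) ^ K / (K.factorial : ℂ)) • E) +
        ∑ j ∈ Finset.range K,
          -(((t:ℂ) ^ (K-1-j) / ((K-1-j).factorial : ℂ)) • (W ^ (j+1) * E)) := by
    rw [Finset.sum_range_succ']
    rw [add_comm]
    congr 1
    · simp
    · apply Finset.sum_congr rfl
      intro j _
      have e1 : K + 1 - (1 + (j+1)) = K - 1 - j := by omega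
      have e2 : 1 + (j+1) - 1 = j + 1 := by omega
      rw [e1, e2]
  have hB : ∑ j ∈ Finset.range (K+1),
      (if K+1-(1+j) = 0 then 0 else
        (t:ℂ) ^ (K+1-(1+j)-1) / ((K+1-(1+j)-1).factorial : ℂ)) • (W ^ (1+j) * E)
      = ∑ j ∈ Finset.range K,
          (((t:ℂ) ^ (K-1-j) / ((K-1-j).factorial : ℂ))) • (W ^ (j+1) * E) := by
    rw [Finset.sum_range_succ]
    have hlast : K + 1 - (1 + K) = 0 := by omega
    rw [hlast, if_pos rfl, zero_smul, add_zero]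
    apply Finset.sum_congr rfl
    intro j hj
    have hj' : j < K := Finset.mem_range.mp hj
    have hne : K + 1 - (1 + j) ≠ 0 := by omega
    rw [if_neg hne]
    have e1 : K + 1 - (1 + j) - 1 = K - 1 - j := by omega
    have e2 : 1 + j = j + 1 := by omega
    rw [e1, e2]
  rw [hA, hB]
  simp only [Nat.add_sub_cancel]
  rw [Finset.sum_neg_distrib]
  abel

/-- If the matrices `Â_k^{(i)}` satisfy the resolvent partial-fraction
relations, then
`P(t) = ∑ i ∑_{k=1}^{n_i} Â_k^{(i)} B Bᵀ [(-λ_i I - Aᵀ)^{-k} -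
∑_{l=1}^{k} (-λ_i I - Aᵀ)^{-l} (t^{k-l}/(k-l)!) exp((λ_i I + Aᵀ)t)]`
satisfies `P(0) = 0` and the differential Lyapunov equation `P' = A P + P Aᵀ + B Bᵀ`. -/
theorem stmt18 (n m p : ℕ) (hp : 0 < p)
    (A : Matrix (Fin n) (Fin n) ℂ) (B : Matrix (Fin n) (Fin m) ℂ)
    (lam : Fin p → ℂ) (hdist : Function.Injective lam)
    (nmul : Fin p → ℕ) (hpos : ∀ i, 0 < nmul i) (hsum : ∑ i, nmul i = n)
    (Ahat : Fin p → ℕ → Matrix (Fin n) (Fin n) ℂ)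
    (htop : ∀ i, A * Ahat i (nmul i) = lam i • Ahat i (nmul i))
    (hchain : ∀ i k, 1 ≤ k → k < nmul i →
      A * Ahat i k = lam i • Ahat i k + Ahat i (k + 1))
    (hcomplete : ∑ i, Ahat i 1 = 1)
    (hinv : ∀ i, IsUnit (lam i • (1 : Matrix (Fin n) (Fin n) ℂ) + Aᵀ).det)
    (P : ℝ → Matrix (Fin n) (Fin n) ℂ)
    (hP : P = fun t : ℝ => ∑ i, ∑ k ∈ Finset.Icc 1 (nmul i),
        Ahat i k * (B * Bᵀ) *
          (((-(lam i) • (1 : Matrix (Fin n) (Fin n) ℂ) - Aᵀ)⁻¹ ^ k) -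
            ∑ l ∈ Finset.Icc 1 k,
              ((t : ℂ) ^ (k - l) / ((k - l).factorial : ℂ)) •
                (((-(lam i) • (1 : Matrix (Fin n) (Fin n) ℂ) - Aᵀ)⁻¹ ^ l) *
                  NormedSpace.exp
                    ((t : ℂ) • (lam i • (1 : Matrix (Fin n) (Fin n) ℂ) + Aᵀ))))) :
    P 0 = 0 ∧ ∀ t : ℝ, HasDerivAt P (A * P t + P t * Aᵀ + B * Bᵀ) t := by
  have hMN : ∀ i, (lam i • (1 : Matrix (Fin n) (Fin n) ℂ) + Aᵀ)
      = -(-(lam i) • (1 : Matrix (Fin n) (Fin n) ℂ) - Aᵀ) := by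
    intro i; rw [neg_smul]; abel
  have hdet : ∀ i, IsUnit (-(lam i) • (1 : Matrix (Fin n) (Fin n) ℂ) - Aᵀ).det := by
    intro i
    have h2 : (-(lam i) • (1 : Matrix (Fin n) (Fin n) ℂ) - Aᵀ)
        = -(lam i • (1 : Matrix (Fin n) (Fin n) ℂ) + Aᵀ) := by
      rw [neg_smul]; abel
    rw [h2, Matrix.det_neg]
    exact (isUnit_one.neg.pow _).mul (hinv i)
  have hWN : ∀ i, (-(lam i) • (1 : Matrix (Fin n) (Fin n) ℂ) - Aᵀ)⁻¹ *
      (lam i • (1 : Matrix (Fin n) (Fin n) ℂ) + Aᵀ) = -1 := by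
    intro i
    rw [hMN i, mul_neg, Matrix.nonsing_inv_mul _ (hdet i)]
  have hNE : ∀ (i : Fin p) (t : ℝ),
      NormedSpace.exp ((t:ℂ) • (lam i • (1 : Matrix (Fin n) (Fin n) ℂ) + Aᵀ)) *
        (lam i • (1 : Matrix (Fin n) (Fin n) ℂ) + Aᵀ)
      = (lam i • (1 : Matrix (Fin n) (Fin n) ℂ) + Aᵀ) *
        NormedSpace.exp ((t:ℂ) • (lam i • (1 : Matrix (Fin n) (Fin n) ℂ) + Aᵀ)) := by
    intro i t
    exact ((Commute.refl _).smul_left (t:ℂ)).exp_left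
  constructor
  · rw [hP]
    apply Finset.sum_eq_zero
    intro i _
    apply Finset.sum_eq_zero
    intro k hk
    rw [stmt18_bracketZero n (lam i • (1 : Matrix (Fin n) (Fin n) ℂ) + Aᵀ)
      ((-(lam i) • (1 : Matrix (Fin n) (Fin n) ℂ) - Aᵀ)⁻¹) k (Finset.mem_Icc.mp hk).1, mul_zero]
  · intro t
    have hder : HasDerivAt P
        (∑ i, ∑ k ∈ Finset.Icc 1 (nmul i),
          Ahat i k * (B * Bᵀ) *
            (((t:ℂ) ^ (k-1) / ((k-1).factorial : ℂ)) •
              NormedSpace.exp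
                ((t:ℂ) • (lam i • (1 : Matrix (Fin n) (Fin n) ℂ) + Aᵀ)))) t := by
      rw [hP]
      exact HasDerivAt.fun_sum fun i _ => HasDerivAt.fun_sum fun k hk =>
        stmt18_constMul n _ (stmt18_bracketDeriv n _ _ (hWN i) k (Finset.mem_Icc.mp hk).1 t)
    have hkey : A * P t + P t * Aᵀ + B * Bᵀ
        = ∑ i, ∑ k ∈ Finset.Icc 1 (nmul i),
            Ahat i k * (B * Bᵀ) *
              (((t:ℂ) ^ (k-1) / ((k-1).factorial : ℂ)) •
                NormedSpace.exp
                  ((t:ℂ) • (lam i • (1 : Matrix (Fin n) (Fin n) ℂ) + Aᵀ))) := by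
      rw [hP]
      simp only [Finset.mul_sum, Finset.sum_mul]
      rw [← Finset.sum_add_distrib]
      have hin : ∀ i ∈ (Finset.univ : Finset (Fin p)),
          ((∑ k ∈ Finset.Icc 1 (nmul i), A * (Ahat i k * (B * Bᵀ) *
              (((-(lam i) • (1 : Matrix (Fin n) (Fin n) ℂ) - Aᵀ)⁻¹ ^ k) -
                ∑ l ∈ Finset.Icc 1 k,
                  ((t : ℂ) ^ (k - l) / ((k - l).factorial : ℂ)) •
                    (((-(lam i) • (1 : Matrix (Fin n) (Fin n) ℂ) - Aᵀ)⁻¹ ^ l) *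
                      NormedSpace.exp
                        ((t : ℂ) • (lam i • (1 : Matrix (Fin n) (Fin n) ℂ) + Aᵀ))))))
            + ∑ k ∈ Finset.Icc 1 (nmul i), (Ahat i k * (B * Bᵀ) *
              (((-(lam i) • (1 : Matrix (Fin n) (Fin n) ℂ) - Aᵀ)⁻¹ ^ k) -
                ∑ l ∈ Finset.Icc 1 k,
                  ((t : ℂ) ^ (k - l) / ((k - l).factorial : ℂ)) •
                    (((-(lam i) • (1 : Matrix (Fin n) (Fin n) ℂ) - Aᵀ)⁻¹ ^ l) *
                      NormedSpace.exp
                        ((t : ℂ) • (lam i • (1 : Matrix (Fin n) (Fin n) ℂ) + Aᵀ))))) * Aᵀ)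
          = (∑ k ∈ Finset.Icc 1 (nmul i),
              Ahat i k * (B * Bᵀ) *
                (((t:ℂ) ^ (k-1) / ((k-1).factorial : ℂ)) •
                  NormedSpace.exp
                    ((t:ℂ) • (lam i • (1 : Matrix (Fin n) (Fin n) ℂ) + Aᵀ))))
            - Ahat i 1 * (B * Bᵀ) := by
        intro i _
        rw [← Finset.sum_add_distrib]
        exact stmt18_inner n A (B * Bᵀ) (lam i) _ _ (hWN i) (hNE i t) (Ahat i) (nmul i)
          (hpos i) (htop i) (fun k h1 h2 => hchain i k h1 h2) t
      rw [Finset.sum_congr rfl hin, Finset.sum_sub_distrib, ← Finset.sum_mul, hcomplete, one_mul]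
      abel
    rw [hkey]
    exact hder
end
end
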